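/- arXiv:1403.1836 — 8 statements merged into one kernel-verified Lean document; each statement's English description precedes it below -/
import Mathlib

section
/- Let p = 1/2, let x₂ > 0, set z = √(1 + x₂) − √(x₂) ∈ (0, 1], and let x₁ ∈ (0, 1). Then the ordered pairing has strictly lower cost than the other pairing, i.e. √(1 − x₁) + √(x₂) < √(1 + x₂) + √(x₁), if and only if x₁ > (1/2)·(1 − √(2z² − z⁴)). -/
/-- For `p = 1/2`, in the alternating pattern red–blue–red–blue with
`0 < x₁ < 1` and `x₂ > 0`, setting `z = √(1 + x₂) − √x₂`, the ordered pairing is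
strictly cheaper, i.e. `√(1 − x₁) + √x₂ < √(1 + x₂) + √x₁`, if and only if
`x₁ > (1/2)·(1 − √(2z² − z⁴))`. -/
theorem ordered_pairing_cheaper_iff_sqrt_case
    (x₁ x₂ : ℝ) (hx₁ : 0 < x₁) (hx₁' : x₁ < 1) (hx₂ : 0 < x₂)
    (z : ℝ) (hz : z = Real.sqrt (1 + x₂) - Real.sqrt x₂) :
    Real.sqrt (1 - x₁) + Real.sqrt x₂ < Real.sqrt (1 + x₂) + Real.sqrt x₁ ↔
      x₁ > (1 / 2) * (1 - Real.sqrt (2 * z ^ 2 - z ^ 4)) := by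
  have hs : Real.sqrt x₂ ^ 2 = x₂ := Real.sq_sqrt hx₂.le
  have hsnn : 0 ≤ Real.sqrt x₂ := Real.sqrt_nonneg _
  have hz0 : 0 < z := by
    rw [hz]
    have := Real.sqrt_lt_sqrt hx₂.le (by linarith : x₂ < 1 + x₂)
    linarith
  have hz1 : z ≤ 1 := by
    rw [hz]
    have h1 : Real.sqrt (1 + x₂) ≤ 1 + Real.sqrt x₂ := by
      have : (1 : ℝ) + x₂ ≤ (1 + Real.sqrt x₂) ^ 2 := by nlinarith
      calc Real.sqrt (1 + x₂) ≤ Real.sqrt ((1 + Real.sqrt x₂) ^ 2) :=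
            Real.sqrt_le_sqrt this
        _ = 1 + Real.sqrt x₂ := Real.sqrt_sq (by linarith)
    linarith
  set w := Real.sqrt (2 * z ^ 2 - z ^ 4) with hw
  have hz2 : z ^ 2 ≤ 1 := by nlinarith
  have harg : 0 ≤ 2 * z ^ 2 - z ^ 4 := by
    nlinarith [mul_nonneg (sq_nonneg z) (by linarith : (0:ℝ) ≤ 1 - z ^ 2), sq_nonneg z]
  have hw2 : w ^ 2 = 2 * z ^ 2 - z ^ 4 := Real.sq_sqrt harg
  have hwnn : 0 ≤ w := Real.sqrt_nonneg _
  have hw1 : w ≤ 1 := by nlinarith [sq_nonneg (1 - z ^ 2), sq_nonneg (w - 1)]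
  set t : ℝ := (1 / 2) * (1 - w) with ht
  have ht0 : 0 ≤ t := by rw [ht]; linarith
  have ht1 : t ≤ 1 / 2 := by rw [ht]; linarith
  -- key: √(1 - t) - √t = z
  have ha2 : Real.sqrt (1 - t) ^ 2 = 1 - t := Real.sq_sqrt (by linarith)
  have hb2 : Real.sqrt t ^ 2 = t := Real.sq_sqrt ht0
  have hab : Real.sqrt (1 - t) * Real.sqrt t = (1 - z ^ 2) / 2 := by
    rw [← Real.sqrt_mul (by linarith)]
    have h1 : (1 - t) * t = ((1 - z ^ 2) / 2) ^ 2 := by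
      rw [ht]; ring_nf; nlinarith [hw2]
    rw [h1, Real.sqrt_sq (by nlinarith)]
  have hge : Real.sqrt t ≤ Real.sqrt (1 - t) := Real.sqrt_le_sqrt (by linarith)
  have hkey : Real.sqrt (1 - t) - Real.sqrt t = z := by
    have hsq : (Real.sqrt (1 - t) - Real.sqrt t) ^ 2 = z ^ 2 := by
      have : (Real.sqrt (1 - t) - Real.sqrt t) ^ 2 =
          Real.sqrt (1 - t) ^ 2 + Real.sqrt t ^ 2 -
            2 * (Real.sqrt (1 - t) * Real.sqrt t) := by ring
      rw [this, ha2, hb2, hab]; ring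
    nlinarith [hsq]
  constructor
  · intro h
    by_contra hle
    push_neg at hle
    have h1 : Real.sqrt (1 - t) ≤ Real.sqrt (1 - x₁) := Real.sqrt_le_sqrt (by linarith)
    have h2 : Real.sqrt x₁ ≤ Real.sqrt t := Real.sqrt_le_sqrt hle
    linarith
  · intro h
    have h1 : Real.sqrt (1 - x₁) < Real.sqrt (1 - t) :=
      Real.sqrt_lt_sqrt (by linarith) (by simpa [ht] using h)
    have h2 : Real.sqrt t < Real.sqrt x₁ := Real.sqrt_lt_sqrt ht0 h
    linarith
end

section
/- For every real p > 1, every optimal matching is ordered: if π is an injection from {1,...,N} to {1,...,M} minimizing E_p, then π is strictly increasing. -/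
/-- For `p > 1`, the function `x ↦ |x| ^ p` is strictly convex on `ℝ`. -/
lemma abs_rpow_strictConvexOn {p : ℝ} (hp : 1 < p) :
    StrictConvexOn ℝ Set.univ (fun x : ℝ => |x| ^ p) := by
  have hp0 : (0 : ℝ) < p := lt_trans zero_lt_one hp
  have h0 := strictConvexOn_rpow hp
  refine ⟨convex_univ, ?_⟩
  intro x _ y _ hxy a c ha hc hac
  simp only [smul_eq_mul]
  by_cases habs : |x| = |y|
  · -- then y = -x with x ≠ 0
    have hy : y = -x := by
      rcases abs_eq_abs.1 habs with h | h
      · exact absurd h hxy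
      · linarith
    have hx0 : x ≠ 0 := by
      intro h; apply hxy; rw [h, hy, h, neg_zero]
    have hcomb : |a * x + c * y| < |x| := by
      rw [hy]
      have : a * x + c * (-x) = (a - c) * x := by ring
      rw [this, abs_mul]
      have h1 : |a - c| < 1 := by
        rw [abs_lt]; constructor <;> linarith
      have h2 : (0 : ℝ) < |x| := abs_pos.2 hx0
      nlinarith
    have hlt : |a * x + c * y| ^ p < |x| ^ p :=
      Real.rpow_lt_rpow (abs_nonneg _) hcomb hp0
    have heq : a * |x| ^ p + c * |y| ^ p = |x| ^ p := by
      rw [← habs]; linear_combination |x| ^ p * hac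
    linarith
  · -- |x| ≠ |y| : use triangle inequality plus strict convexity on [0, ∞)
    have htri : |a * x + c * y| ≤ a * |x| + c * |y| := by
      calc |a * x + c * y| ≤ |a * x| + |c * y| := abs_add_le _ _
        _ = a * |x| + c * |y| := by
            rw [abs_mul, abs_mul, abs_of_pos ha, abs_of_pos hc]
    have h1 : |a * x + c * y| ^ p ≤ (a * |x| + c * |y|) ^ p :=
      Real.rpow_le_rpow (abs_nonneg _) htri hp0.le
    have h2 := h0.2 (Set.mem_Ici.2 (abs_nonneg x)) (Set.mem_Ici.2 (abs_nonneg y))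
      habs ha hc hac
    simp only [smul_eq_mul] at h2
    linarith

/-- The key four-point inequality: uncrossing strictly decreases the `p`-cost. -/
lemma uncross_lt {p : ℝ} (hp : 1 < p) {a b c d : ℝ} (hab : a < b) (hcd : c < d) :
    |c - a| ^ p + |d - b| ^ p < |d - a| ^ p + |c - b| ^ p := by
  set f : ℝ → ℝ := fun x => |x| ^ p with hf
  have hsc := abs_rpow_strictConvexOn hp
  set x₀ : ℝ := c - b
  set z : ℝ := d - a
  have hxz : x₀ < z := by simp only [x₀, z]; linarith
  have hs : (0 : ℝ) < z - x₀ := by linarith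
  -- y₁ = c - a, y₂ = d - b
  set t : ℝ := (z - (c - a)) / (z - x₀) with ht
  have ht0 : 0 < t := div_pos (by simp only [z]; linarith) hs
  have ht1 : 0 < 1 - t := by
    have : t < 1 := by
      rw [ht, div_lt_one hs]
      simp only [x₀]; linarith
    linarith
  have hy1 : t • x₀ + (1 - t) • z = c - a := by
    simp only [smul_eq_mul, ht]
    field_simp
    ring
  have hy2 : (1 - t) • x₀ + t • z = d - b := by
    simp only [smul_eq_mul, ht]
    field_simp
    ring
  have hxz' : x₀ ≠ z := ne_of_lt hxz
  have h1 := hsc.2 (Set.mem_univ x₀) (Set.mem_univ z) hxz' ht0 ht1 (by ring)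
  have h2 := hsc.2 (Set.mem_univ x₀) (Set.mem_univ z) hxz' ht1 ht0 (by ring)
  rw [hy1] at h1
  rw [hy2] at h2
  simp only [smul_eq_mul] at h1 h2
  have : |c - a| ^ p + |d - b| ^ p < |x₀| ^ p + |z| ^ p := by
    have := add_lt_add h1 h2
    nlinarith
  have h' : |x₀| ^ p + |z| ^ p = |c - b| ^ p + |d - a| ^ p := rfl
  linarith

open Finset in
/-- For `p > 1`, every optimal matching (injection of the `N` red points, listed in
increasing order, into the `M ≥ N` blue points, listed in increasing order, minimizing
`∑ i, |b (π i) − r i|^p`) is ordered, i.e. strictly increasing. -/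
theorem optimal_matching_ordered_of_one_lt_exponent
    (p : ℝ) (hp : 1 < p) (N M : ℕ) (hNM : N ≤ M)
    (r : Fin N → ℝ) (b : Fin M → ℝ)
    (hr : StrictMono r) (hb : StrictMono b)
    (hdist : ∀ i j, r i ≠ b j)
    (π : Fin N → Fin M) (hπ : Function.Injective π)
    (hopt : ∀ π' : Fin N → Fin M, Function.Injective π' →
      ∑ i, |b (π i) - r i| ^ p ≤ ∑ i, |b (π' i) - r i| ^ p) :
    StrictMono π := by
  by_contra h
  simp only [StrictMono, not_forall] at h
  obtain ⟨i, j, hij, hnot⟩ := h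
  have hne : i ≠ j := ne_of_lt hij
  have hπlt : π j < π i :=
    lt_of_le_of_ne (not_lt.1 hnot) fun h => hπ h ▸ hne.symm <| rfl
  -- the swapped matching
  set π' : Fin N → Fin M := π ∘ Equiv.swap i j with hπ'def
  have hπ'inj : Function.Injective π' := hπ.comp (Equiv.swap i j).injective
  have hsplit : ∀ f : Fin N → ℝ,
      ∑ k, f k = f i + (f j + ∑ k ∈ (univ.erase i).erase j, f k) := by
    intro f
    rw [← Finset.add_sum_erase _ f (mem_univ i),
      ← Finset.add_sum_erase _ f (Finset.mem_erase.2 ⟨hne.symm, mem_univ j⟩)]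
  have hrest : ∑ k ∈ (univ.erase i).erase j, |b (π' k) - r k| ^ p
      = ∑ k ∈ (univ.erase i).erase j, |b (π k) - r k| ^ p := by
    refine Finset.sum_congr rfl fun k hk => ?_
    rw [Finset.mem_erase, Finset.mem_erase] at hk
    obtain ⟨hkj, hki, -⟩ := hk
    simp [hπ'def, Equiv.swap_apply_of_ne_of_ne hki hkj]
  have hi' : π' i = π j := by simp [hπ'def]
  have hj' : π' j = π i := by simp [hπ'def]
  have hkey : |b (π' i) - r i| ^ p + |b (π' j) - r j| ^ p
      < |b (π i) - r i| ^ p + |b (π j) - r j| ^ p := by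
    rw [hi', hj']
    have h1 : r i < r j := hr hij
    have h2 : b (π j) < b (π i) := hb hπlt
    have := uncross_lt hp h1 h2
    linarith
  have hE : ∑ k, |b (π' k) - r k| ^ p < ∑ k, |b (π k) - r k| ^ p := by
    rw [hsplit (fun k => |b (π' k) - r k| ^ p), hsplit (fun k => |b (π k) - r k| ^ p),
      hrest]
    linarith
  exact absurd (hopt π' hπ'inj) (not_le.2 hE)
end

section
/- For every real p with 0 < p < 1, every optimal matching is non-crossing: if π is an injection from {1,...,N} to {1,...,M} minimizing E_p, then no two edges of π cross. -/
private lemma rpow_spread {p : ℝ} (hp0 : 0 < p) (hp1 : p < 1) {a b c d : ℝ}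
    (ha : 0 ≤ a) (hab : a < b) (hac : a < c) (hsum : a + d = b + c) :
    a ^ p + d ^ p < b ^ p + c ^ p := by
  have hbd : b < d := by linarith
  have had : a < d := lt_trans hab hbd
  have hda : d - a ≠ 0 := by linarith
  have hsc := Real.strictConcaveOn_rpow hp0 hp1
  set t : ℝ := (d - b) / (d - a) with ht
  have ht0 : 0 < t := div_pos (by linarith) (by linarith)
  have ht1 : 0 < 1 - t := by
    have : t < 1 := (div_lt_one (by linarith)).2 (by linarith)
    linarith
  have h1 : t • ((a : ℝ) ^ p) + (1 - t) • (d ^ p) < (t • a + (1 - t) • d) ^ p :=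
    hsc.2 (Set.mem_Ici.2 ha) (Set.mem_Ici.2 (by linarith : (0:ℝ) ≤ d))
      (by linarith) ht0 ht1 (by ring)
  have h2 : (1 - t) • ((a : ℝ) ^ p) + t • (d ^ p) < ((1 - t) • a + t • d) ^ p :=
    hsc.2 (Set.mem_Ici.2 ha) (Set.mem_Ici.2 (by linarith : (0:ℝ) ≤ d))
      (by linarith) ht1 ht0 (by ring)
  have hb' : t • a + (1 - t) • d = b := by
    simp only [smul_eq_mul, ht]; field_simp; ring
  have hc' : (1 - t) • a + t • d = c := by
    simp only [smul_eq_mul, ht]; field_simp; ring_nf; nlinarith [hsum]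
  rw [hb'] at h1
  rw [hc'] at h2
  simp only [smul_eq_mul] at h1 h2
  nlinarith [h1, h2]

private lemma rpow_core {p A B C D : ℝ} (hp0 : 0 < p) (hp1 : p < 1)
    (h1 : min A B < min C D) (h2 : min C D < max A B) (h3 : max A B < max C D) :
    |D - A| ^ p + |B - C| ^ p < |B - A| ^ p + |D - C| ^ p := by
  rcases le_total A B with hAB | hAB <;> rcases le_total C D with hCD | hCD <;>
    simp only [min_eq_left, min_eq_right, max_eq_left, max_eq_right, hAB, hCD] at h1 h2 h3
  · -- A ≤ B, C ≤ D : a=A, b'=B, c=C, d=D; spread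
    rw [abs_of_nonneg (by linarith), abs_of_nonneg (by linarith),
        abs_of_nonneg (by linarith), abs_of_nonneg (by linarith)]
    have := rpow_spread hp0 hp1 (a := B - C) (b := B - A) (c := D - C) (d := D - A)
      (by linarith) (by linarith) (by linarith) (by ring)
    linarith
  · -- A ≤ B, D ≤ C : h1 : A < D, h2 : D < B, h3 : B < C; mono
    rw [abs_of_nonneg (by linarith), abs_of_nonpos (by linarith),
        abs_of_nonneg (by linarith), abs_of_nonpos (by linarith)]
    simp only [neg_sub]
    exact add_lt_add (Real.rpow_lt_rpow (by linarith) (by linarith) hp0)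
      (Real.rpow_lt_rpow (by linarith) (by linarith) hp0)
  · -- B ≤ A, C ≤ D : h1 : B < C, h2 : C < A, h3 : A < D; mono
    rw [abs_of_nonneg (by linarith), abs_of_nonpos (by linarith),
        abs_of_nonpos (by linarith), abs_of_nonneg (by linarith)]
    simp only [neg_sub]
    have k1 : (D - A) ^ p < (D - C) ^ p :=
      Real.rpow_lt_rpow (by linarith) (by linarith) hp0
    have k2 : (C - B) ^ p < (A - B) ^ p :=
      Real.rpow_lt_rpow (by linarith) (by linarith) hp0
    linarith
  · -- B ≤ A, D ≤ C : h1 : B < D, h2 : D < A, h3 : A < C; spread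
    rw [abs_of_nonpos (by linarith), abs_of_nonpos (by linarith),
        abs_of_nonpos (by linarith), abs_of_nonpos (by linarith)]
    simp only [neg_sub]
    have := rpow_spread hp0 hp1 (a := A - D) (b := A - B) (c := C - D) (d := C - B)
      (by linarith) (by linarith) (by linarith) (by ring)
    linarith

open Finset in
/-- For `0 < p < 1`, every optimal matching (injection of the `N` red points into the
`M ≥ N` blue points minimizing `∑ i, |b (π i) − r i|^p`) is non-crossing: no two of its
edges, viewed as intervals with endpoints `r i` and `b (π i)`, cross. -/
theorem optimal_matching_noncrossing_of_exponent_lt_one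
    (p : ℝ) (hp0 : 0 < p) (hp1 : p < 1) (N M : ℕ) (hNM : N ≤ M)
    (r : Fin N → ℝ) (b : Fin M → ℝ)
    (hr : StrictMono r) (hb : StrictMono b)
    (hdist : ∀ i j, r i ≠ b j)
    (π : Fin N → Fin M) (hπ : Function.Injective π)
    (hopt : ∀ π' : Fin N → Fin M, Function.Injective π' →
      ∑ i, |b (π i) - r i| ^ p ≤ ∑ i, |b (π' i) - r i| ^ p) :
    ∀ i j : Fin N, i ≠ j →
      ¬ (min (r i) (b (π i)) < min (r j) (b (π j)) ∧
         min (r j) (b (π j)) < max (r i) (b (π i)) ∧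
         max (r i) (b (π i)) < max (r j) (b (π j))) := by
  intro i j hij hcross
  obtain ⟨h1, h2, h3⟩ := hcross
  set π' : Fin N → Fin M := π ∘ (Equiv.swap i j) with hπ'def
  have hπ'inj : Function.Injective π' := hπ.comp (Equiv.swap i j).injective
  have hle := hopt π' hπ'inj
  -- show strict decrease
  have hlt : ∑ k, |b (π' k) - r k| ^ p < ∑ k, |b (π k) - r k| ^ p := by
    have hsub : ({i, j} : Finset (Fin N)) ⊆ univ := subset_univ _
    rw [← Finset.sum_sdiff hsub, ← Finset.sum_sdiff hsub]
    have heq : ∑ k ∈ univ \ {i, j}, |b (π' k) - r k| ^ p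
        = ∑ k ∈ univ \ {i, j}, |b (π k) - r k| ^ p := by
      refine Finset.sum_congr rfl fun k hk => ?_
      simp only [Finset.mem_sdiff, Finset.mem_insert, Finset.mem_singleton] at hk
      push_neg at hk
      have : π' k = π k := by
        simp [hπ'def, Equiv.swap_apply_of_ne_of_ne hk.2.1 hk.2.2]
      rw [this]
    rw [heq]
    have hpair : ∀ (g : Fin N → ℝ), ∑ k ∈ ({i, j} : Finset (Fin N)), g k = g i + g j :=
      fun g => Finset.sum_pair hij
    rw [hpair, hpair]
    have hπ'i : π' i = π j := by simp [hπ'def]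
    have hπ'j : π' j = π i := by simp [hπ'def]
    rw [hπ'i, hπ'j]
    have hcore := rpow_core (A := r i) (B := b (π i)) (C := r j) (D := b (π j))
      hp0 hp1 h1 h2 h3
    linarith
  linarith
end

section
/- Let p = 1. If all 2L points r₁,...,r_L, b₁,...,b_L together with their antipodes (the points x + 1/2 taken modulo 1) are pairwise distinct, then there exists a cyclic optimal matching. -/
open MeasureTheory Set

theorem Equiv.Perm.apply_inv_self {α : Type*} (f : Equiv.Perm α) (x : α) : f (f⁻¹ x) = x :=
  f.apply_symm_apply x

/-- Distance on the circle of unit circumference, for points represented in `[0,1)`. -/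
noncomputable def circleDist (x y : ℝ) : ℝ := min |x - y| (1 - |x - y|)

/-- The antipode of a point of `[0,1)`: the point `x + 1/2` taken modulo `1`. -/
noncomputable def antipode (x : ℝ) : ℝ := if x + 1/2 < 1 then x + 1/2 else x + 1/2 - 1

/-- An ordered triple of pairwise distinct points of `[0,1)` is cyclically oriented if
the points appear in counter-clockwise order. -/
def CyclicallyOriented (x y z : ℝ) : Prop :=
  (x < y ∧ y < z) ∨ (y < z ∧ z < x) ∨ (z < x ∧ x < y)

namespace CMAux

lemma fract_pos' {d : ℝ} (h0 : 0 ≤ d) (h1 : d < 1) : Int.fract d = d :=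
  Int.fract_eq_self.2 ⟨h0, h1⟩

lemma fract_neg' {d : ℝ} (h0 : -1 ≤ d) (h1 : d < 0) : Int.fract d = d + 1 := by
  have h : Int.fract (d + ((1:ℤ):ℝ)) = Int.fract d := Int.fract_add_intCast d 1
  have h2 : Int.fract (d + 1) = d + 1 := Int.fract_eq_self.2 ⟨by linarith, by linarith⟩
  push_cast at h
  linarith [h, h2]

lemma cyc_iff_sum {x y z : ℝ} (hx : x ∈ Ico (0:ℝ) 1) (hy : y ∈ Ico (0:ℝ) 1)
    (hz : z ∈ Ico (0:ℝ) 1) (hxy : x ≠ y) (hyz : y ≠ z) (hxz : x ≠ z) :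
    CyclicallyOriented x y z ↔
      Int.fract (y - x) + Int.fract (z - y) + Int.fract (x - z) = 1 := by
  obtain ⟨hx0, hx1⟩ := hx
  obtain ⟨hy0, hy1⟩ := hy
  obtain ⟨hz0, hz1⟩ := hz
  rcases lt_or_gt_of_ne hxy with h1 | h1 <;> rcases lt_or_gt_of_ne hyz with h2 | h2 <;>
    rcases lt_or_gt_of_ne hxz with h3 | h3
  · -- x<y, y<z, x<z : oriented
    rw [fract_pos' (by linarith) (by linarith), fract_pos' (by linarith) (by linarith),
      fract_neg' (by linarith) (by linarith)]
    exact iff_of_true (Or.inl ⟨h1, h2⟩) (by ring)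
  · linarith
  · -- x<y, z<y, x<z : x<z<y not oriented
    rw [fract_pos' (by linarith) (by linarith), fract_neg' (by linarith) (by linarith),
      fract_neg' (by linarith) (by linarith)]
    refine iff_of_false ?_ (by intro h; linarith)
    rintro (⟨a, c⟩ | ⟨a, c⟩ | ⟨a, c⟩) <;> linarith
  · -- x<y, z<y, z<x : z<x<y oriented
    rw [fract_pos' (by linarith) (by linarith), fract_neg' (by linarith) (by linarith),
      fract_pos' (by linarith) (by linarith)]
    exact iff_of_true (Or.inr (Or.inr ⟨h3, h1⟩)) (by ring)
  · -- y<x, y<z, x<z : y<x<z not oriented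
    rw [fract_neg' (by linarith) (by linarith), fract_pos' (by linarith) (by linarith),
      fract_neg' (by linarith) (by linarith)]
    refine iff_of_false ?_ (by intro h; linarith)
    rintro (⟨a, c⟩ | ⟨a, c⟩ | ⟨a, c⟩) <;> linarith
  · -- y<x, y<z, z<x : y<z<x oriented
    rw [fract_neg' (by linarith) (by linarith), fract_pos' (by linarith) (by linarith),
      fract_pos' (by linarith) (by linarith)]
    exact iff_of_true (Or.inr (Or.inl ⟨h2, h3⟩)) (by ring)
  · linarith
  · -- y<x, z<y, z<x : z<y<x not oriented
    rw [fract_neg' (by linarith) (by linarith), fract_neg' (by linarith) (by linarith),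
      fract_pos' (by linarith) (by linarith)]
    refine iff_of_false ?_ (by intro h; linarith)
    rintro (⟨a, c⟩ | ⟨a, c⟩ | ⟨a, c⟩) <;> linarith

lemma fract_sub_eq_zero_iff {u v : ℝ} (hu : u ∈ Ico (0:ℝ) 1) (hv : v ∈ Ico (0:ℝ) 1) :
    Int.fract (u - v) = 0 ↔ u = v := by
  obtain ⟨hu0, hu1⟩ := hu
  obtain ⟨hv0, hv1⟩ := hv
  constructor
  · intro h
    rcases lt_trichotomy u v with hlt | he | hgt
    · rw [fract_neg' (by linarith) (by linarith)] at h; linarith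
    · exact he
    · rw [fract_pos' (by linarith) (by linarith)] at h; linarith
  · intro h; simp [h]

lemma cyc_congr {x y z x' y' z' : ℝ} (hx : x ∈ Ico (0:ℝ) 1) (hy : y ∈ Ico (0:ℝ) 1)
    (hz : z ∈ Ico (0:ℝ) 1) (hx' : x' ∈ Ico (0:ℝ) 1) (hy' : y' ∈ Ico (0:ℝ) 1)
    (hz' : z' ∈ Ico (0:ℝ) 1) (hxy : x ≠ y) (hyz : y ≠ z) (hxz : x ≠ z)
    (e1 : Int.fract (y - x) = Int.fract (y' - x'))
    (e2 : Int.fract (z - y) = Int.fract (z' - y'))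
    (e3 : Int.fract (x - z) = Int.fract (x' - z')) :
    CyclicallyOriented x y z ↔ CyclicallyOriented x' y' z' := by
  have hxy' : x' ≠ y' := by
    intro h
    have : Int.fract (y - x) = 0 := by rw [e1, h]; simp
    exact hxy ((fract_sub_eq_zero_iff hy hx).1 this).symm
  have hyz' : y' ≠ z' := by
    intro h
    have : Int.fract (z - y) = 0 := by rw [e2, h]; simp
    exact hyz ((fract_sub_eq_zero_iff hz hy).1 this).symm
  have hxz' : x' ≠ z' := by
    intro h
    have : Int.fract (x - z) = 0 := by rw [e3, h]; simp
    exact hxz ((fract_sub_eq_zero_iff hx hz).1 this)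
  rw [cyc_iff_sum hx hy hz hxy hyz hxz, cyc_iff_sum hx' hy' hz' hxy' hyz' hxz',
    e1, e2, e3]

noncomputable def shift (t0 u : ℝ) : ℝ := if t0 ≤ u then u - t0 else u - t0 + 1

lemma shift_mem {t0 u : ℝ} (ht0 : t0 ∈ Ioo (0:ℝ) 1) (hu : u ∈ Ico (0:ℝ) 1) :
    shift t0 u ∈ Ico (0:ℝ) 1 := by
  obtain ⟨h1, h2⟩ := ht0; obtain ⟨h3, h4⟩ := hu
  unfold shift; split <;> constructor <;> linarith

lemma fract_shift_sub (t0 u v : ℝ) :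
    Int.fract (shift t0 u - shift t0 v) = Int.fract (u - v) := by
  unfold shift
  have hp : Int.fract (u - v + ((1:ℤ):ℝ)) = Int.fract (u - v) := Int.fract_add_intCast _ 1
  have hm : Int.fract (u - v + ((-1:ℤ):ℝ)) = Int.fract (u - v) := Int.fract_add_intCast _ (-1)
  push_cast at hp hm
  split <;> split
  · ring_nf
  · rw [show u - t0 - (v - t0 + 1) = u - v + (-1) by ring]; exact hm
  · rw [show u - t0 + 1 - (v - t0) = u - v + 1 by ring]; exact hp
  · ring_nf

lemma shift_inj {t0 u v : ℝ} (hu : u ∈ Ico (0:ℝ) 1) (hv : v ∈ Ico (0:ℝ) 1)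
    (h : shift t0 u = shift t0 v) : u = v := by
  have : Int.fract (u - v) = 0 := by
    rw [← fract_shift_sub t0, h]; simp
  exact (fract_sub_eq_zero_iff hu hv).1 this

lemma circleDist_fract {u v : ℝ} (hu : u ∈ Ico (0:ℝ) 1) (hv : v ∈ Ico (0:ℝ) 1) :
    circleDist u v = min (Int.fract (u - v)) (Int.fract (v - u)) := by
  obtain ⟨hu0, hu1⟩ := hu
  obtain ⟨hv0, hv1⟩ := hv
  rcases lt_trichotomy u v with h | h | h
  · rw [circleDist, abs_of_nonpos (by linarith), fract_neg' (by linarith) (by linarith),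
      fract_pos' (by linarith) (by linarith)]
    rw [min_comm]
    congr 1 <;> ring
  · subst h
    simp [circleDist]
  · rw [circleDist, abs_of_nonneg (by linarith), fract_pos' (by linarith) (by linarith),
      fract_neg' (by linarith) (by linarith)]
    congr 1
    ring

lemma circleDist_shift {t0 u v : ℝ} (ht0 : t0 ∈ Ioo (0:ℝ) 1) (hu : u ∈ Ico (0:ℝ) 1)
    (hv : v ∈ Ico (0:ℝ) 1) :
    circleDist (shift t0 u) (shift t0 v) = circleDist u v := by
  rw [circleDist_fract (shift_mem ht0 hu) (shift_mem ht0 hv), circleDist_fract hu hv,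
    fract_shift_sub, fract_shift_sub]

lemma circleDist_le_abs (u v : ℝ) : circleDist u v ≤ |u - v| := min_le_left _ _

end CMAux

noncomputable def chi (x t : ℝ) : ℝ := if x ≤ t then 1 else 0

noncomputable def Fzed (L : ℕ) (r b : Fin L → ℝ) (t : ℝ) : ℤ :=
  (∑ i, if r i ≤ t then (1:ℤ) else 0) - ∑ i, if b i ≤ t then (1:ℤ) else 0

noncomputable def FR (L : ℕ) (r b : Fin L → ℝ) (t : ℝ) : ℝ :=
  (∑ i, chi (r i) t) - ∑ i, chi (b i) t

namespace CMAux


lemma chi_meas (x : ℝ) : Measurable (chi x) :=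
  Measurable.ite measurableSet_Ici measurable_const measurable_const

lemma abs_chi_le (x t : ℝ) : |chi x t| ≤ 1 := by
  unfold chi; split <;> norm_num

lemma integrableOn_of_bdd {f : ℝ → ℝ} {a b : ℝ} (hm : Measurable f) (C : ℝ)
    (hb : ∀ t, |f t| ≤ C) : IntegrableOn f (Ioc a b) := by
  have : IsFiniteMeasure (volume.restrict (Ioc a b)) := by
    constructor
    rw [Measure.restrict_apply_univ, Real.volume_Ioc]
    exact ENNReal.ofReal_lt_top
  exact Integrable.mono' (integrable_const C) hm.aestronglyMeasurable
    (ae_of_all _ fun t => by simpa [Real.norm_eq_abs] using hb t)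

lemma integrable_chi (x : ℝ) : IntegrableOn (chi x) (Ioc (0:ℝ) 1) :=
  integrableOn_of_bdd (chi_meas x) 1 (abs_chi_le x)

lemma integral_chi {x : ℝ} (h0 : 0 ≤ x) (h1 : x ≤ 1) :
    ∫ t in Ioc (0:ℝ) 1, chi x t = 1 - x := by
  have heq : ∀ t ∈ Ioc (0:ℝ) 1, chi x t = (Ici x).indicator (fun _ => (1:ℝ)) t := by
    intro t _
    simp only [chi, indicator, mem_Ici]
  rw [setIntegral_congr_fun measurableSet_Ioc heq,
    setIntegral_indicator measurableSet_Ici, setIntegral_const]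
  have hvol : volume (Ioc (0:ℝ) 1 ∩ Ici x) = ENNReal.ofReal (1 - x) := by
    apply le_antisymm
    · calc volume (Ioc (0:ℝ) 1 ∩ Ici x) ≤ volume (Icc x 1) := by
            apply measure_mono
            rintro t ⟨⟨_, ht2⟩, ht3⟩
            exact ⟨ht3, ht2⟩
        _ = ENNReal.ofReal (1 - x) := Real.volume_Icc
    · calc ENNReal.ofReal (1 - x) = volume (Ioc x 1) := Real.volume_Ioc.symm
        _ ≤ volume (Ioc (0:ℝ) 1 ∩ Ici x) := by
            apply measure_mono
            rintro t ⟨ht1, ht2⟩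
            exact ⟨⟨lt_of_le_of_lt h0 ht1, ht2⟩, le_of_lt ht1⟩
  rw [measureReal_def, hvol, smul_eq_mul, mul_one, ENNReal.toReal_ofReal (by linarith)]

lemma integral_comb (u v a c e : ℝ) (hu0 : 0 ≤ u) (hu1 : u ≤ 1) (hv0 : 0 ≤ v) (hv1 : v ≤ 1) :
    ∫ t in Ioc (0:ℝ) 1, (a * chi u t + c * chi v t + e) =
      a * (1 - u) + c * (1 - v) + e := by
  have h1 : IntegrableOn (fun t => a * chi u t) (Ioc (0:ℝ) 1) :=
    (integrable_chi u).const_mul a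
  have h2 : IntegrableOn (fun t => c * chi v t) (Ioc (0:ℝ) 1) :=
    (integrable_chi v).const_mul c
  have h12 : IntegrableOn (fun t => a * chi u t + c * chi v t) (Ioc (0:ℝ) 1) := h1.add h2
  have h3 : IntegrableOn (fun _ : ℝ => e) (Ioc (0:ℝ) 1) := integrableOn_const (by
    rw [Real.volume_Ioc]; exact ENNReal.ofReal_ne_top)
  rw [integral_add h12 h3, integral_add h1 h2, integral_const_mul, integral_const_mul,
    integral_chi hu0 hu1, integral_chi hv0 hv1, setIntegral_const]
  rw [measureReal_def, Real.volume_Ioc, smul_eq_mul, ENNReal.toReal_ofReal (by norm_num)]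
  norm_num

lemma pair_repr_le {u v : ℝ} (hu : u ∈ Ico (0:ℝ) 1) (hv : v ∈ Ico (0:ℝ) 1) (huv : u ≤ v) :
    ∃ e : ℤ, circleDist u v = ∫ t in Ioc (0:ℝ) 1, |chi u t - chi v t - (e:ℝ)| := by
  obtain ⟨hu0, hu1⟩ := hu
  obtain ⟨hv0, hv1⟩ := hv
  have habs : |u - v| = v - u := by rw [abs_of_nonpos (by linarith)]; ring
  by_cases hd : v - u ≤ 1/2
  · refine ⟨0, ?_⟩
    have hpt : ∀ t ∈ Ioc (0:ℝ) 1, |chi u t - chi v t - ((0:ℤ):ℝ)| =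
        1 * chi u t + (-1) * chi v t + 0 := by
      intro t _
      by_cases h1 : u ≤ t <;> by_cases h2 : v ≤ t
      · norm_num [chi, h1, h2]
      · norm_num [chi, h1, h2]
      · exact absurd (le_trans huv h2) h1
      · norm_num [chi, h1, h2]
    rw [setIntegral_congr_fun measurableSet_Ioc hpt,
      integral_comb u v 1 (-1) 0 hu0 (by linarith) hv0 (by linarith)]
    rw [circleDist, habs, min_eq_left (by linarith)]
    ring
  · refine ⟨1, ?_⟩
    have hpt : ∀ t ∈ Ioc (0:ℝ) 1, |chi u t - chi v t - ((1:ℤ):ℝ)| =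
        (-1) * chi u t + 1 * chi v t + 1 := by
      intro t _
      by_cases h1 : u ≤ t <;> by_cases h2 : v ≤ t
      · norm_num [chi, h1, h2]
      · norm_num [chi, h1, h2]
      · exact absurd (le_trans huv h2) h1
      · norm_num [chi, h1, h2]
    rw [setIntegral_congr_fun measurableSet_Ioc hpt,
      integral_comb u v (-1) 1 1 hu0 (by linarith) hv0 (by linarith)]
    rw [circleDist, habs, min_eq_right (by linarith)]
    ring

lemma pair_repr {u v : ℝ} (hu : u ∈ Ico (0:ℝ) 1) (hv : v ∈ Ico (0:ℝ) 1) :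
    ∃ e : ℤ, circleDist u v = ∫ t in Ioc (0:ℝ) 1, |chi u t - chi v t - (e:ℝ)| := by
  rcases le_total u v with h | h
  · exact pair_repr_le hu hv h
  · obtain ⟨e, he⟩ := pair_repr_le hv hu h
    refine ⟨-e, ?_⟩
    have hsym : circleDist u v = circleDist v u := by
      rw [circleDist, circleDist, abs_sub_comm]
    rw [hsym, he]
    apply setIntegral_congr_fun measurableSet_Ioc
    intro t _
    show |chi v t - chi u t - (e:ℝ)| = |chi u t - chi v t - ((-e : ℤ):ℝ)|
    push_cast
    rw [← abs_neg (chi v t - chi u t - (e:ℝ))]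
    congr 1
    ring

lemma abs_sub_eq_integral {u v : ℝ} (hu0 : 0 ≤ u) (hu1 : u ≤ 1) (hv0 : 0 ≤ v) (hv1 : v ≤ 1) :
    |u - v| = ∫ t in Ioc (0:ℝ) 1, |chi u t - chi v t| := by
  wlog h : u ≤ v generalizing u v
  · rw [abs_sub_comm, this hv0 hv1 hu0 hu1 (by linarith)]
    apply setIntegral_congr_fun measurableSet_Ioc
    intro t _
    show |chi v t - chi u t| = |chi u t - chi v t|
    rw [abs_sub_comm]
  have hpt : ∀ t ∈ Ioc (0:ℝ) 1, |chi u t - chi v t| = 1 * chi u t + (-1) * chi v t + 0 := by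
    intro t _
    by_cases h1 : u ≤ t <;> by_cases h2 : v ≤ t
    · norm_num [chi, h1, h2]
    · norm_num [chi, h1, h2]
    · exact absurd (le_trans h h2) h1
    · norm_num [chi, h1, h2]
  rw [setIntegral_congr_fun measurableSet_Ioc hpt, integral_comb u v 1 (-1) 0 hu0 hu1 hv0 hv1]
  rw [abs_of_nonpos (by linarith)]
  ring



lemma FR_eq (L : ℕ) (r b : Fin L → ℝ) (t : ℝ) : FR L r b t = ((Fzed L r b t : ℤ) : ℝ) := by
  unfold FR Fzed chi
  push_cast
  rfl

lemma measurable_Fzed (L : ℕ) (r b : Fin L → ℝ) : Measurable (Fzed L r b) := by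
  apply Measurable.sub <;>
  · apply Finset.measurable_sum
    intro i _
    exact Measurable.ite measurableSet_Ici measurable_const measurable_const

lemma Fzed_bounds (L : ℕ) (r b : Fin L → ℝ) (t : ℝ) :
    -(L:ℤ) ≤ Fzed L r b t ∧ Fzed L r b t ≤ L := by
  unfold Fzed
  have h1 : ∀ (v : Fin L → ℝ), (0:ℤ) ≤ ∑ i, if v i ≤ t then (1:ℤ) else 0 := fun v =>
    Finset.sum_nonneg fun i _ => by split <;> norm_num
  have h2 : ∀ (v : Fin L → ℝ), (∑ i, if v i ≤ t then (1:ℤ) else 0) ≤ L := by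
    intro v
    calc (∑ i, if v i ≤ t then (1:ℤ) else 0) ≤ ∑ _i : Fin L, (1:ℤ) :=
          Finset.sum_le_sum fun i _ => by split <;> norm_num
      _ = L := by simp
  constructor
  · have := h1 r; have := h2 b; omega
  · have := h2 r; have := h1 b; omega

lemma measurable_FR (L : ℕ) (r b : Fin L → ℝ) : Measurable (FR L r b) := by
  apply Measurable.sub <;> exact Finset.measurable_sum _ fun i _ => chi_meas _

lemma abs_FR_le (L : ℕ) (r b : Fin L → ℝ) (t : ℝ) : |FR L r b t| ≤ 2 * L := by
  obtain ⟨h1, h2⟩ := Fzed_bounds L r b t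
  have h1' : ((-(L:ℤ) : ℤ) : ℝ) ≤ ((Fzed L r b t : ℤ) : ℝ) := Int.cast_le.2 h1
  have h2' : ((Fzed L r b t : ℤ) : ℝ) ≤ ((L : ℤ) : ℝ) := Int.cast_le.2 h2
  rw [FR_eq, abs_le]
  push_cast at h1' h2'
  constructor <;> linarith [Nat.cast_nonneg (α := ℝ) L]

lemma integrable_absFR (L : ℕ) (r b : Fin L → ℝ) (c : ℝ) :
    IntegrableOn (fun t => |FR L r b t - c|) (Ioc (0:ℝ) 1) := by
  apply integrableOn_of_bdd (((measurable_FR L r b).sub measurable_const).abs) (2*L + |c|)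
  intro t
  rw [abs_abs]
  calc |FR L r b t - c| ≤ |FR L r b t| + |c| := abs_sub _ _
    _ ≤ 2*L + |c| := by linarith [abs_FR_le L r b t]

lemma integrableOn_stepI {B : Set ℝ} (hB : MeasurableSet B) (p q : ℝ) :
    IntegrableOn (fun t => B.indicator (fun _ => p) t + q) (Ioc (0:ℝ) 1) := by
  have hfin : volume (Ioc (0:ℝ) 1) < ⊤ := by rw [Real.volume_Ioc]; exact ENNReal.ofReal_lt_top
  exact (Integrable.indicator (integrableOn_const hfin.ne) hB).add
    (integrableOn_const hfin.ne)

lemma integral_stepI {B : Set ℝ} (hB : MeasurableSet B) (p q : ℝ) :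
    ∫ t in Ioc (0:ℝ) 1, (B.indicator (fun _ => p) t + q) =
      p * (volume (Ioc (0:ℝ) 1 ∩ B)).toReal + q := by
  have hfin : volume (Ioc (0:ℝ) 1) < ⊤ := by rw [Real.volume_Ioc]; exact ENNReal.ofReal_lt_top
  have hind : IntegrableOn (B.indicator (fun _ => p)) (Ioc (0:ℝ) 1) :=
    Integrable.indicator (integrableOn_const hfin.ne) hB
  have hconst : IntegrableOn (fun _ : ℝ => q) (Ioc (0:ℝ) 1) := integrableOn_const hfin.ne
  rw [integral_add hind hconst, setIntegral_indicator hB, setIntegral_const, setIntegral_const]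
  rw [measureReal_def, measureReal_def, Real.volume_Ioc, smul_eq_mul, smul_eq_mul,
    ENNReal.toReal_ofReal (by norm_num)]
  ring

lemma median (L : ℕ) (r b : Fin L → ℝ) :
    ∃ c : ℤ, volume ({t | Fzed L r b t = c} ∩ Ioc (0:ℝ) 1) ≠ 0 ∧
      ∀ c' : ℤ,
        (∫ t in Ioc (0:ℝ) 1, |FR L r b t - (c:ℝ)|) ≤
          ∫ t in Ioc (0:ℝ) 1, |FR L r b t - (c':ℝ)| := by
  classical
  set μ := volume.restrict (Ioc (0:ℝ) 1) with hμdef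
  have hμuniv : μ univ = 1 := by
    rw [hμdef, Measure.restrict_apply_univ, Real.volume_Ioc]
    norm_num
  set A : ℤ → Set ℝ := fun c => {t | c ≤ Fzed L r b t} with hAdef
  have hAmeas : ∀ c, MeasurableSet (A c) := fun c =>
    measurable_Fzed L r b (show MeasurableSet (Ici c) from trivial)
  have hμA : ∀ c : ℤ, μ (A c) = volume (A c ∩ Ioc (0:ℝ) 1) := fun c =>
    Measure.restrict_apply (hAmeas c)
  set S : Finset ℤ := (Finset.Icc (-(L:ℤ)) (L:ℤ)).filter
    (fun c => ENNReal.ofReal (1/2) ≤ μ (A c)) with hSdef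
  have hSne : (-(L:ℤ)) ∈ S := by
    rw [hSdef, Finset.mem_filter]
    refine ⟨Finset.mem_Icc.2 ⟨le_refl _, by omega⟩, ?_⟩
    have hAall : A (-(L:ℤ)) = univ := eq_univ_of_forall fun t => (Fzed_bounds L r b t).1
    rw [hAall, hμuniv]
    exact ENNReal.ofReal_le_one.2 (by norm_num)
  set c : ℤ := S.max' ⟨_, hSne⟩ with hcdef
  have hcS : c ∈ S := S.max'_mem ⟨_, hSne⟩
  have hc1 : ENNReal.ofReal (1/2) ≤ μ (A c) := (Finset.mem_filter.1 hcS).2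
  have hcIcc := Finset.mem_Icc.1 (Finset.mem_filter.1 hcS).1
  have hc2 : μ (A (c + 1)) < ENNReal.ofReal (1/2) := by
    by_cases hL : (L:ℤ) < c + 1
    · have hempty : A (c + 1) = ∅ := by
        apply eq_empty_iff_forall_notMem.2
        intro t ht
        have := (Fzed_bounds L r b t).2
        have : c + 1 ≤ Fzed L r b t := ht
        omega
      rw [hempty, measure_empty]
      exact ENNReal.ofReal_pos.2 (by norm_num)
    · push_neg at hL
      by_contra hcon
      push_neg at hcon
      have hmem : c + 1 ∈ S := by
        rw [hSdef, Finset.mem_filter]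
        exact ⟨Finset.mem_Icc.2 ⟨by omega, hL⟩, hcon⟩
      have := S.le_max' _ hmem
      rw [← hcdef] at this
      omega
  -- finiteness facts
  have hμfin : ∀ s : Set ℝ, μ s ≠ ⊤ := by
    intro s
    have : μ s ≤ μ univ := measure_mono (subset_univ s)
    rw [hμuniv] at this
    exact ne_top_of_le_ne_top ENNReal.one_ne_top this
  have hfinvol : ∀ s : Set ℝ, volume (Ioc (0:ℝ) 1 ∩ s) ≠ ⊤ := fun s =>
    ne_top_of_le_ne_top (by rw [Real.volume_Ioc]; exact ENNReal.ofReal_ne_top)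
      (measure_mono inter_subset_left)
  refine ⟨c, ?_, ?_⟩
  · -- attainment
    intro h0
    have hsplit : A c ⊆ A (c + 1) ∪ {t | Fzed L r b t = c} := by
      intro t ht
      have : c ≤ Fzed L r b t := ht
      rcases eq_or_lt_of_le this with he | hlt
      · exact Or.inr he.symm
      · exact Or.inl (by simpa [hAdef] using hlt)
    have hμeq : μ {t | Fzed L r b t = c} = 0 := by
      have hmeas : MeasurableSet {t | Fzed L r b t = c} :=
        measurable_Fzed L r b (show MeasurableSet {c} from trivial)
      rw [Measure.restrict_apply hmeas]
      exact h0
    have : μ (A c) ≤ μ (A (c+1)) + μ {t | Fzed L r b t = c} :=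
      le_trans (measure_mono hsplit) (measure_union_le _ _)
    rw [hμeq, add_zero] at this
    exact absurd (lt_of_le_of_lt (le_trans hc1 this) hc2) (lt_irrefl _)
  · -- minimality
    intro c'
    rcases lt_trichotomy c' c with hlt | heq | hgt
    · -- c' < c
      set d : ℝ := (c:ℝ) - (c':ℝ) with hddef
      have hd0 : 0 < d := by rw [hddef]; push_cast; exact sub_pos.2 (by exact_mod_cast hlt)
      have hpt : ∀ t ∈ Ioc (0:ℝ) 1,
          |FR L r b t - (c:ℝ)| + ((A c).indicator (fun _ => 2*d) t + (-d)) ≤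
            |FR L r b t - (c':ℝ)| := by
        intro t _
        by_cases ht : t ∈ A c
        · have hFc : (c:ℝ) ≤ FR L r b t := by
            rw [FR_eq]; exact_mod_cast (show c ≤ Fzed L r b t from ht)
          rw [indicator_of_mem ht]
          rw [abs_of_nonneg (by linarith), abs_of_nonneg (by linarith)]
          linarith
        · rw [indicator_of_notMem ht]
          have := abs_sub_abs_le_abs_sub (FR L r b t - (c:ℝ)) (FR L r b t - (c':ℝ))
          have h2 : |(FR L r b t - (c:ℝ)) - (FR L r b t - (c':ℝ))| = d := by
            rw [show (FR L r b t - (c:ℝ)) - (FR L r b t - (c':ℝ)) = -d by rw [hddef]; ring,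
              abs_neg, abs_of_pos hd0]
          linarith
      have hint : ∫ t in Ioc (0:ℝ) 1,
          (|FR L r b t - (c:ℝ)| + ((A c).indicator (fun _ => 2*d) t + (-d))) ≤
            ∫ t in Ioc (0:ℝ) 1, |FR L r b t - (c':ℝ)| :=
        setIntegral_mono_on ((integrable_absFR L r b (c:ℝ)).add
          (integrableOn_stepI (hAmeas c) (2*d) (-d)))
          (integrable_absFR L r b (c':ℝ)) measurableSet_Ioc hpt
      rw [integral_add (integrable_absFR L r b (c:ℝ))
        (integrableOn_stepI (hAmeas c) (2*d) (-d)), integral_stepI (hAmeas c)] at hint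
      have hm : (1:ℝ)/2 ≤ (volume (Ioc (0:ℝ) 1 ∩ A c)).toReal := by
        have := hc1
        rw [hμA, inter_comm] at this
        exact (ENNReal.ofReal_le_iff_le_toReal (hfinvol _)).1 this
      nlinarith [hint, hm, hd0]
    · rw [heq]
    · -- c < c'
      set d : ℝ := (c':ℝ) - (c:ℝ) with hddef
      have hd0 : 0 < d := by rw [hddef]; push_cast; exact sub_pos.2 (by exact_mod_cast hgt)
      have hpt : ∀ t ∈ Ioc (0:ℝ) 1,
          |FR L r b t - (c:ℝ)| + ((A (c+1)).indicator (fun _ => -(2*d)) t + d) ≤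
            |FR L r b t - (c':ℝ)| := by
        intro t _
        by_cases ht : t ∈ A (c+1)
        · rw [indicator_of_mem ht]
          have := abs_sub_abs_le_abs_sub (FR L r b t - (c:ℝ)) (FR L r b t - (c':ℝ))
          have h2 : |(FR L r b t - (c:ℝ)) - (FR L r b t - (c':ℝ))| = d := by
            rw [show (FR L r b t - (c:ℝ)) - (FR L r b t - (c':ℝ)) = d by rw [hddef]; ring,
              abs_of_pos hd0]
          linarith
        · rw [indicator_of_notMem ht]
          have hFc : FR L r b t ≤ (c:ℝ) := by
            rw [FR_eq]
            have : ¬ (c + 1 ≤ Fzed L r b t) := ht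
            exact_mod_cast (show Fzed L r b t ≤ c by omega)
          have hcc' : (c:ℝ) ≤ (c':ℝ) := by exact_mod_cast le_of_lt hgt
          rw [abs_of_nonpos (by linarith), abs_of_nonpos (by linarith)]
          linarith [hddef]
      have hint : ∫ t in Ioc (0:ℝ) 1,
          (|FR L r b t - (c:ℝ)| + ((A (c+1)).indicator (fun _ => -(2*d)) t + d)) ≤
            ∫ t in Ioc (0:ℝ) 1, |FR L r b t - (c':ℝ)| :=
        setIntegral_mono_on ((integrable_absFR L r b (c:ℝ)).add
          (integrableOn_stepI (hAmeas (c+1)) (-(2*d)) d))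
          (integrable_absFR L r b (c':ℝ)) measurableSet_Ioc hpt
      rw [integral_add (integrable_absFR L r b (c:ℝ))
        (integrableOn_stepI (hAmeas (c+1)) (-(2*d)) d), integral_stepI (hAmeas (c+1))] at hint
      have hm : (volume (Ioc (0:ℝ) 1 ∩ A (c+1))).toReal < 1/2 := by
        have := hc2
        rw [hμA, inter_comm] at this
        exact (ENNReal.lt_ofReal_iff_toReal_lt (hfinvol _)).1 this
      nlinarith [hint, hm, hd0]


lemma lower_bound (L : ℕ) (r b : Fin L → ℝ) (hr : ∀ i, r i ∈ Ico (0:ℝ) 1)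
    (hb : ∀ i, b i ∈ Ico (0:ℝ) 1) (π' : Equiv.Perm (Fin L)) :
    ∃ cc : ℤ, (∫ t in Ioc (0:ℝ) 1, |FR L r b t - (cc:ℝ)|) ≤
      ∑ i, circleDist (r i) (b (π' i)) := by
  choose e he using fun i => pair_repr (hr i) (hb (π' i))
  refine ⟨∑ i, e i, ?_⟩
  set g : Fin L → ℝ → ℝ := fun i t => |chi (r i) t - chi (b (π' i)) t - (e i : ℝ)| with hgdef
  have hg_meas : ∀ i : Fin L, Measurable (g i) := fun i =>
    (((chi_meas (r i)).sub (chi_meas (b (π' i)))).sub measurable_const).abs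
  have hg_bd : ∀ i : Fin L, ∀ t, |g i t| ≤ 2 + |(e i : ℝ)| := by
    intro i t
    rw [hgdef]
    simp only
    rw [abs_abs]
    calc |chi (r i) t - chi (b (π' i)) t - (e i : ℝ)|
        ≤ |chi (r i) t - chi (b (π' i)) t| + |(e i : ℝ)| := abs_sub _ _
      _ ≤ (|chi (r i) t| + |chi (b (π' i)) t|) + |(e i : ℝ)| := by
          linarith [abs_sub (chi (r i) t) (chi (b (π' i)) t)]
      _ ≤ 2 + |(e i : ℝ)| := by
          linarith [abs_chi_le (r i) t, abs_chi_le (b (π' i)) t]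
  have hg_int : ∀ i ∈ Finset.univ, IntegrableOn (g i) (Ioc (0:ℝ) 1) := fun i _ =>
    integrableOn_of_bdd (hg_meas i) _ (hg_bd i)
  calc ∫ t in Ioc (0:ℝ) 1, |FR L r b t - ((∑ i, e i : ℤ):ℝ)|
      ≤ ∫ t in Ioc (0:ℝ) 1, ∑ i, g i t := by
        apply setIntegral_mono_on (integrable_absFR L r b _)
          (integrable_finset_sum _ hg_int) measurableSet_Ioc
        intro t _
        have hFR : FR L r b t - ((∑ i, e i : ℤ):ℝ) =
            ∑ i, (chi (r i) t - chi (b (π' i)) t - (e i : ℝ)) := by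
          rw [Finset.sum_sub_distrib, Finset.sum_sub_distrib, FR]
          rw [Equiv.sum_comp π' (fun j => chi (b j) t)]
          push_cast
          ring
        rw [hFR]
        exact Finset.abs_sum_le_sum_abs _ _
    _ = ∑ i, ∫ t in Ioc (0:ℝ) 1, g i t := integral_finset_sum Finset.univ hg_int
    _ = ∑ i, circleDist (r i) (b (π' i)) :=
        Finset.sum_congr rfl fun i _ => (he i).symm

lemma chi_shift_1 {t0 u t : ℝ} (hu : u ∈ Ico (0:ℝ) 1) (hut : u ≠ t0)
    (ht0 : t0 ∈ Ioo (0:ℝ) 1) (ht : t ∈ Ioo (0:ℝ) (1 - t0)) :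
    chi (shift t0 u) t = chi u (t + t0) - chi u t0 := by
  obtain ⟨hu0, hu1⟩ := hu
  obtain ⟨h01, h02⟩ := ht0
  obtain ⟨hta, htb⟩ := ht
  rcases lt_or_gt_of_ne hut with h | h
  · rw [show shift t0 u = u - t0 + 1 from if_neg (not_le.2 h)]
    simp only [chi]
    rw [if_neg (show ¬ (u - t0 + 1 ≤ t) by intro hc; linarith),
      if_pos (show u ≤ t + t0 by linarith), if_pos (le_of_lt h)]
    norm_num
  · rw [show shift t0 u = u - t0 from if_pos (le_of_lt h)]
    simp only [chi]
    rw [if_neg (not_le.2 h), sub_zero]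
    by_cases hc : u - t0 ≤ t
    · rw [if_pos hc, if_pos (show u ≤ t + t0 by linarith)]
    · rw [if_neg hc, if_neg (fun hcc => hc (by linarith))]

lemma chi_shift_2 {t0 u t : ℝ} (hu : u ∈ Ico (0:ℝ) 1) (hut : u ≠ t0)
    (ht0 : t0 ∈ Ioo (0:ℝ) 1) (ht : t ∈ Ioo (1 - t0) 1) :
    chi (shift t0 u) t = chi u (t + t0 - 1) - chi u t0 + 1 := by
  obtain ⟨hu0, hu1⟩ := hu
  obtain ⟨h01, h02⟩ := ht0
  obtain ⟨hta, htb⟩ := ht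
  rcases lt_or_gt_of_ne hut with h | h
  · rw [show shift t0 u = u - t0 + 1 from if_neg (not_le.2 h)]
    simp only [chi]
    rw [if_pos (le_of_lt h)]
    by_cases hc : u - t0 + 1 ≤ t
    · rw [if_pos hc, if_pos (show u ≤ t + t0 - 1 by linarith)]; norm_num
    · rw [if_neg hc, if_neg (fun hcc => hc (by linarith))]; norm_num
  · rw [show shift t0 u = u - t0 from if_pos (le_of_lt h)]
    simp only [chi]
    rw [if_pos (show u - t0 ≤ t by linarith),
      if_neg (show ¬ (u ≤ t + t0 - 1) by intro hc; linarith), if_neg (not_le.2 h)]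
    norm_num

lemma line_identity (L : ℕ) (x' y' : Fin L → ℝ) (hx : ∀ k, x' k ∈ Ico (0:ℝ) 1)
    (hy : ∀ k, y' k ∈ Ico (0:ℝ) 1) (hxm : StrictMono x') (hym : StrictMono y') :
    ∑ k, |x' k - y' k| =
      ∫ t in Ioc (0:ℝ) 1, |∑ k, (chi (x' k) t - chi (y' k) t)| := by
  have h_meas : ∀ k : Fin L, Measurable (fun t => |chi (x' k) t - chi (y' k) t|) :=
    fun k => ((chi_meas _).sub (chi_meas _)).abs
  have h_bd : ∀ k : Fin L, ∀ t, |(|chi (x' k) t - chi (y' k) t|)| ≤ 2 := by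
    intro k t
    rw [abs_abs]
    calc |chi (x' k) t - chi (y' k) t| ≤ |chi (x' k) t| + |chi (y' k) t| := abs_sub _ _
      _ ≤ 2 := by linarith [abs_chi_le (x' k) t, abs_chi_le (y' k) t]
  have h_int : ∀ k ∈ Finset.univ, IntegrableOn (fun t => |chi (x' k) t - chi (y' k) t|)
      (Ioc (0:ℝ) 1) := fun k _ => integrableOn_of_bdd (h_meas k) 2 (h_bd k)
  calc ∑ k, |x' k - y' k|
      = ∑ k, ∫ t in Ioc (0:ℝ) 1, |chi (x' k) t - chi (y' k) t| :=
        Finset.sum_congr rfl fun k _ =>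
          abs_sub_eq_integral (hx k).1 (le_of_lt (hx k).2) (hy k).1 (le_of_lt (hy k).2)
    _ = ∫ t in Ioc (0:ℝ) 1, ∑ k, |chi (x' k) t - chi (y' k) t| :=
        (integral_finset_sum Finset.univ h_int).symm
    _ = ∫ t in Ioc (0:ℝ) 1, |∑ k, (chi (x' k) t - chi (y' k) t)| := by
        apply setIntegral_congr_fun measurableSet_Ioc
        intro t _
        show ∑ k, |chi (x' k) t - chi (y' k) t| = |∑ k, (chi (x' k) t - chi (y' k) t)|
        have key : (∀ k, 0 ≤ chi (x' k) t - chi (y' k) t) ∨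
            (∀ k, chi (x' k) t - chi (y' k) t ≤ 0) := by
          by_contra hcon
          push_neg at hcon
          obtain ⟨⟨k, hk⟩, ⟨l, hl⟩⟩ := hcon
          simp only [chi] at hk hl
          have hky : y' k ≤ t := by
            by_contra hc
            rw [if_neg hc, sub_zero] at hk
            split_ifs at hk <;> linarith
          have hkx : ¬ x' k ≤ t := by
            intro hc
            rw [if_pos hc, if_pos hky] at hk
            linarith
          have hlx : x' l ≤ t := by
            by_contra hc
            rw [if_neg hc] at hl
            split_ifs at hl <;> linarith
          have hly : ¬ y' l ≤ t := by
            intro hc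
            rw [if_pos hc, if_pos hlx] at hl
            linarith
          have hkl : k < l := hym.lt_iff_lt.1 (lt_of_le_of_lt hky (not_le.1 hly))
          have hlk : l < k := hxm.lt_iff_lt.1 (lt_of_le_of_lt hlx (not_le.1 hkx))
          omega
        rcases key with hpos | hneg
        · rw [abs_of_nonneg (Finset.sum_nonneg fun k _ => hpos k)]
          exact Finset.sum_congr rfl fun k _ => abs_of_nonneg (hpos k)
        · rw [abs_of_nonpos (Finset.sum_nonpos fun k _ => hneg k), ← Finset.sum_neg_distrib]
          exact Finset.sum_congr rfl fun k _ => abs_of_nonpos (hneg k)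

lemma transfer (L : ℕ) (r b : Fin L → ℝ) (hr : ∀ i, r i ∈ Ico (0:ℝ) 1)
    (hb : ∀ i, b i ∈ Ico (0:ℝ) 1) (t0 : ℝ) (ht0 : t0 ∈ Ioo (0:ℝ) 1)
    (ht0r : ∀ i, r i ≠ t0) (ht0b : ∀ i, b i ≠ t0) :
    ∫ t in Ioc (0:ℝ) 1, |∑ i, (chi (shift t0 (r i)) t - chi (shift t0 (b i)) t)| =
      ∫ t in Ioc (0:ℝ) 1, |FR L r b t - FR L r b t0| := by
  obtain ⟨h01, h02⟩ := ht0
  set G : ℝ → ℝ := fun t => ∑ i, (chi (shift t0 (r i)) t - chi (shift t0 (b i)) t) with hGdef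
  set g : ℝ → ℝ := fun τ => |FR L r b τ - FR L r b t0| with hgdef
  have hGmeas : Measurable (fun t => |G t|) :=
    (Finset.measurable_sum _ (fun i _ => (chi_meas _).sub (chi_meas _))).abs
  have hGbd : ∀ t, |(|G t|)| ≤ 2 * L := by
    intro t
    rw [abs_abs, hGdef]
    calc |∑ i, (chi (shift t0 (r i)) t - chi (shift t0 (b i)) t)|
        ≤ ∑ i, |chi (shift t0 (r i)) t - chi (shift t0 (b i)) t| :=
          Finset.abs_sum_le_sum_abs _ _
      _ ≤ ∑ _i : Fin L, (2:ℝ) := Finset.sum_le_sum fun i _ => by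
          calc |chi (shift t0 (r i)) t - chi (shift t0 (b i)) t|
              ≤ |chi (shift t0 (r i)) t| + |chi (shift t0 (b i)) t| := abs_sub _ _
            _ ≤ 2 := by linarith [abs_chi_le (shift t0 (r i)) t, abs_chi_le (shift t0 (b i)) t]
      _ = 2 * L := by simp [mul_comm]
  have hgmeas : Measurable g := ((measurable_FR L r b).sub measurable_const).abs
  have hgbd : ∀ τ, |g τ| ≤ 4 * L := by
    intro τ
    rw [hgdef, abs_abs]
    calc |FR L r b τ - FR L r b t0| ≤ |FR L r b τ| + |FR L r b t0| := abs_sub _ _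
      _ ≤ 4 * L := by linarith [abs_FR_le L r b τ, abs_FR_le L r b t0]
  have hGint : ∀ a c : ℝ, a ≤ c → IntervalIntegrable (fun t => |G t|) volume a c :=
    fun a c hac => (intervalIntegrable_iff_integrableOn_Ioc_of_le hac).2
      (integrableOn_of_bdd hGmeas _ hGbd)
  have hgint : ∀ a c : ℝ, a ≤ c → IntervalIntegrable g volume a c :=
    fun a c hac => (intervalIntegrable_iff_integrableOn_Ioc_of_le hac).2
      (integrableOn_of_bdd hgmeas _ hgbd)
  have key1 : ∫ t in (0:ℝ)..(1 - t0), |G t| = ∫ τ in t0..(1:ℝ), g τ := by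
    rw [intervalIntegral.integral_of_le (by linarith), integral_Ioc_eq_integral_Ioo]
    have hcongr : ∫ t in Ioo (0:ℝ) (1 - t0), |G t| =
        ∫ t in Ioo (0:ℝ) (1 - t0), g (t + t0) := by
      apply setIntegral_congr_fun measurableSet_Ioo
      intro t ht
      show |G t| = g (t + t0)
      have hG : G t = FR L r b (t + t0) - FR L r b t0 := by
        rw [hGdef]
        show (∑ i, (chi (shift t0 (r i)) t - chi (shift t0 (b i)) t)) = _
        rw [Finset.sum_sub_distrib,
          Finset.sum_congr rfl (fun i _ => chi_shift_1 (hr i) (ht0r i) ⟨h01, h02⟩ ht),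
          Finset.sum_congr rfl (fun i _ => chi_shift_1 (hb i) (ht0b i) ⟨h01, h02⟩ ht),
          Finset.sum_sub_distrib, Finset.sum_sub_distrib, FR, FR]
        ring
      rw [hgdef, hG]
    rw [hcongr, ← integral_Ioc_eq_integral_Ioo,
      ← intervalIntegral.integral_of_le (show (0:ℝ) ≤ 1 - t0 by linarith),
      intervalIntegral.integral_comp_add_right g t0,
      show (0:ℝ) + t0 = t0 by ring, show (1 - t0) + t0 = (1:ℝ) by ring]
  have key2 : ∫ t in (1 - t0)..(1:ℝ), |G t| = ∫ τ in (0:ℝ)..t0, g τ := by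
    rw [intervalIntegral.integral_of_le (by linarith), integral_Ioc_eq_integral_Ioo]
    have hcongr : ∫ t in Ioo (1 - t0) (1:ℝ), |G t| =
        ∫ t in Ioo (1 - t0) (1:ℝ), g (t + (t0 - 1)) := by
      apply setIntegral_congr_fun measurableSet_Ioo
      intro t ht
      show |G t| = g (t + (t0 - 1))
      have hG : G t = FR L r b (t + (t0 - 1)) - FR L r b t0 := by
        rw [hGdef]
        show (∑ i, (chi (shift t0 (r i)) t - chi (shift t0 (b i)) t)) = _
        have hrr : ∀ i : Fin L, chi (shift t0 (r i)) t =
            chi (r i) (t + (t0 - 1)) - chi (r i) t0 + 1 := by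
          intro i
          rw [show t + (t0 - 1) = t + t0 - 1 by ring]
          exact chi_shift_2 (hr i) (ht0r i) ⟨h01, h02⟩ ht
        have hbb : ∀ i : Fin L, chi (shift t0 (b i)) t =
            chi (b i) (t + (t0 - 1)) - chi (b i) t0 + 1 := by
          intro i
          rw [show t + (t0 - 1) = t + t0 - 1 by ring]
          exact chi_shift_2 (hb i) (ht0b i) ⟨h01, h02⟩ ht
        rw [Finset.sum_sub_distrib, Finset.sum_congr rfl (fun i _ => hrr i),
          Finset.sum_congr rfl (fun i _ => hbb i), Finset.sum_add_distrib,
          Finset.sum_add_distrib, Finset.sum_sub_distrib, Finset.sum_sub_distrib, FR, FR]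
        ring
      rw [hgdef, hG]
    rw [hcongr, ← integral_Ioc_eq_integral_Ioo,
      ← intervalIntegral.integral_of_le (show (1:ℝ) - t0 ≤ 1 by linarith),
      intervalIntegral.integral_comp_add_right g (t0 - 1),
      show (1 - t0) + (t0 - 1) = (0:ℝ) by ring, show (1:ℝ) + (t0 - 1) = t0 by ring]
  calc ∫ t in Ioc (0:ℝ) 1, |G t| = ∫ t in (0:ℝ)..1, |G t| :=
        (intervalIntegral.integral_of_le (by norm_num)).symm
    _ = (∫ t in (0:ℝ)..(1 - t0), |G t|) + ∫ t in (1 - t0)..(1:ℝ), |G t| :=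
        (intervalIntegral.integral_add_adjacent_intervals
          (hGint 0 (1 - t0) (by linarith)) (hGint (1 - t0) 1 (by linarith))).symm
    _ = (∫ τ in t0..(1:ℝ), g τ) + ∫ τ in (0:ℝ)..t0, g τ := by rw [key1, key2]
    _ = ∫ τ in (0:ℝ)..1, g τ := by
        rw [add_comm]
        exact intervalIntegral.integral_add_adjacent_intervals
          (hgint 0 t0 (by linarith)) (hgint t0 1 (by linarith))
    _ = ∫ τ in Ioc (0:ℝ) 1, g τ := intervalIntegral.integral_of_le (by norm_num)

lemma upper_bound (L : ℕ) (r b : Fin L → ℝ) (hr : ∀ i, r i ∈ Ico (0:ℝ) 1)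
    (hb : ∀ i, b i ∈ Ico (0:ℝ) 1) (hrinj : Function.Injective r)
    (hbinj : Function.Injective b) (t0 : ℝ) (ht0 : t0 ∈ Ioo (0:ℝ) 1)
    (ht0r : ∀ i, r i ≠ t0) (ht0b : ∀ i, b i ≠ t0) :
    ∃ ρ : Equiv.Perm (Fin L),
      (∑ i, circleDist (r i) (b (ρ i)) ≤
        ∫ t in Ioc (0:ℝ) 1, |FR L r b t - FR L r b t0|) ∧
      (∀ i₁ i₂ i₃ : Fin L, i₁ ≠ i₂ → i₁ ≠ i₃ → i₂ ≠ i₃ →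
        (CyclicallyOriented (r i₁) (r i₂) (r i₃) ↔
          CyclicallyOriented (b ((ρ : Equiv.Perm (Fin L)) i₁)) (b (ρ i₂)) (b (ρ i₃)))) := by
  have hfinj : Function.Injective (fun i => shift t0 (r i)) := fun i j h =>
    hrinj (shift_inj (hr i) (hr j) h)
  have hginj : Function.Injective (fun i => shift t0 (b i)) := fun i j h =>
    hbinj (shift_inj (hb i) (hb j) h)
  set σr := Tuple.sort (fun i => shift t0 (r i)) with hσrdef
  set σb := Tuple.sort (fun i => shift t0 (b i)) with hσbdef
  have hx_mono : StrictMono ((fun i => shift t0 (r i)) ∘ σr) :=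
    (Tuple.monotone_sort _).strictMono_of_injective (hfinj.comp σr.injective)
  have hy_mono : StrictMono ((fun i => shift t0 (b i)) ∘ σb) :=
    (Tuple.monotone_sort _).strictMono_of_injective (hginj.comp σb.injective)
  have hx_lt : ∀ a c : Fin L, shift t0 (r (σr a)) < shift t0 (r (σr c)) ↔ a < c :=
    fun a c => hx_mono.lt_iff_lt
  have hy_lt : ∀ a c : Fin L, shift t0 (b (σb a)) < shift t0 (b (σb c)) ↔ a < c :=
    fun a c => hy_mono.lt_iff_lt
  refine ⟨σb * σr⁻¹, ?_, ?_⟩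
  · have happ : ∀ k : Fin L, (σb * σr⁻¹) (σr k) = σb k := by
      intro k
      simp [Equiv.Perm.mul_apply]
    calc ∑ i, circleDist (r i) (b ((σb * σr⁻¹) i))
        = ∑ k, circleDist (r (σr k)) (b ((σb * σr⁻¹) (σr k))) :=
          (Equiv.sum_comp σr (fun i => circleDist (r i) (b ((σb * σr⁻¹) i)))).symm
      _ = ∑ k, circleDist (shift t0 (r (σr k))) (shift t0 (b (σb k))) := by
          apply Finset.sum_congr rfl
          intro k _
          rw [happ k, circleDist_shift ht0 (hr (σr k)) (hb (σb k))]
      _ ≤ ∑ k, |shift t0 (r (σr k)) - shift t0 (b (σb k))| :=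
          Finset.sum_le_sum fun k _ => circleDist_le_abs _ _
      _ = ∫ t in Ioc (0:ℝ) 1,
            |∑ k, (chi (shift t0 (r (σr k))) t - chi (shift t0 (b (σb k))) t)| :=
          line_identity L ((fun i => shift t0 (r i)) ∘ σr) ((fun i => shift t0 (b i)) ∘ σb)
            (fun k => shift_mem ht0 (hr _)) (fun k => shift_mem ht0 (hb _)) hx_mono hy_mono
      _ = ∫ t in Ioc (0:ℝ) 1, |∑ i, (chi (shift t0 (r i)) t - chi (shift t0 (b i)) t)| := by
          apply setIntegral_congr_fun measurableSet_Ioc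
          intro t _
          show |∑ k, (chi (shift t0 (r (σr k))) t - chi (shift t0 (b (σb k))) t)| =
            |∑ i, (chi (shift t0 (r i)) t - chi (shift t0 (b i)) t)|
          congr 1
          rw [Finset.sum_sub_distrib, Finset.sum_sub_distrib,
            Equiv.sum_comp σr (fun i => chi (shift t0 (r i)) t),
            Equiv.sum_comp σb (fun i => chi (shift t0 (b i)) t)]
      _ = ∫ t in Ioc (0:ℝ) 1, |FR L r b t - FR L r b t0| :=
          transfer L r b hr hb t0 ht0 ht0r ht0b
  · intro i₁ i₂ i₃ h12 h13 h23
    have hrne : ∀ {a c : Fin L}, a ≠ c → r a ≠ r c := fun h hc => h (hrinj hc)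
    have hbne : ∀ {a c : Fin L}, a ≠ c → b a ≠ b c := fun h hc => h (hbinj hc)
    set k₁ := σr⁻¹ i₁ with hk₁def
    set k₂ := σr⁻¹ i₂ with hk₂def
    set k₃ := σr⁻¹ i₃ with hk₃def
    have hk12 : k₁ ≠ k₂ := fun h => h12 (by
      rw [← Equiv.Perm.apply_inv_self σr i₁, ← Equiv.Perm.apply_inv_self σr i₂,
        ← hk₁def, ← hk₂def, h])
    have hk13 : k₁ ≠ k₃ := fun h => h13 (by
      rw [← Equiv.Perm.apply_inv_self σr i₁, ← Equiv.Perm.apply_inv_self σr i₃,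
        ← hk₁def, ← hk₃def, h])
    have hk23 : k₂ ≠ k₃ := fun h => h23 (by
      rw [← Equiv.Perm.apply_inv_self σr i₂, ← Equiv.Perm.apply_inv_self σr i₃,
        ← hk₂def, ← hk₃def, h])
    have s1 : CyclicallyOriented (r i₁) (r i₂) (r i₃) ↔
        CyclicallyOriented (shift t0 (r i₁)) (shift t0 (r i₂)) (shift t0 (r i₃)) :=
      cyc_congr (hr i₁) (hr i₂) (hr i₃) (shift_mem ht0 (hr i₁)) (shift_mem ht0 (hr i₂))
        (shift_mem ht0 (hr i₃)) (hrne h12) (hrne h23) (hrne h13)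
        (fract_shift_sub t0 _ _).symm (fract_shift_sub t0 _ _).symm
        (fract_shift_sub t0 _ _).symm
    have s2 : CyclicallyOriented (shift t0 (r i₁)) (shift t0 (r i₂)) (shift t0 (r i₃)) ↔
        ((k₁ < k₂ ∧ k₂ < k₃) ∨ (k₂ < k₃ ∧ k₃ < k₁) ∨ (k₃ < k₁ ∧ k₁ < k₂)) := by
      rw [show r i₁ = r (σr k₁) by rw [hk₁def, Equiv.Perm.apply_inv_self],
        show r i₂ = r (σr k₂) by rw [hk₂def, Equiv.Perm.apply_inv_self],
        show r i₃ = r (σr k₃) by rw [hk₃def, Equiv.Perm.apply_inv_self]]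
      simp only [CyclicallyOriented, hx_lt]
    have hb1 : (σb * σr⁻¹) i₁ = σb k₁ := rfl
    have hb2 : (σb * σr⁻¹) i₂ = σb k₂ := rfl
    have hb3 : (σb * σr⁻¹) i₃ = σb k₃ := rfl
    have hσbne : ∀ {a c : Fin L}, a ≠ c → σb a ≠ σb c := fun h hc => h (σb.injective hc)
    have s3 : CyclicallyOriented (b (σb k₁)) (b (σb k₂)) (b (σb k₃)) ↔
        CyclicallyOriented (shift t0 (b (σb k₁))) (shift t0 (b (σb k₂)))
          (shift t0 (b (σb k₃))) :=
      cyc_congr (hb _) (hb _) (hb _) (shift_mem ht0 (hb _)) (shift_mem ht0 (hb _))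
        (shift_mem ht0 (hb _)) (hbne (hσbne hk12)) (hbne (hσbne hk23)) (hbne (hσbne hk13))
        (fract_shift_sub t0 _ _).symm (fract_shift_sub t0 _ _).symm
        (fract_shift_sub t0 _ _).symm
    have s4 : CyclicallyOriented (shift t0 (b (σb k₁))) (shift t0 (b (σb k₂)))
        (shift t0 (b (σb k₃))) ↔
        ((k₁ < k₂ ∧ k₂ < k₃) ∨ (k₂ < k₃ ∧ k₃ < k₁) ∨ (k₃ < k₁ ∧ k₁ < k₂)) := by
      simp only [CyclicallyOriented, hy_lt]
    rw [hb1, hb2, hb3]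
    exact s1.trans (s2.trans ((s3.trans s4).symm))

end CMAux

open Finset in
/-- For `p = 1`, if the `2L` points together with their antipodes are pairwise
distinct, then there exists a cyclic optimal matching on the circle. -/
theorem exists_cyclic_optimal_circle_matching_p_one
    (L : ℕ) (r b : Fin L → ℝ)
    (hr : ∀ i, r i ∈ Set.Ico (0 : ℝ) 1) (hb : ∀ i, b i ∈ Set.Ico (0 : ℝ) 1)
    (hdist : Function.Injective
      (Sum.elim (Sum.elim r b) (Sum.elim (fun i => antipode (r i)) (fun i => antipode (b i))) :
        (Fin L ⊕ Fin L) ⊕ (Fin L ⊕ Fin L) → ℝ)) :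
    ∃ π : Equiv.Perm (Fin L),
      (∀ π' : Equiv.Perm (Fin L),
        ∑ i, circleDist (r i) (b (π i)) ^ (1 : ℝ) ≤
          ∑ i, circleDist (r i) (b (π' i)) ^ (1 : ℝ)) ∧
      (∀ i₁ i₂ i₃ : Fin L, i₁ ≠ i₂ → i₁ ≠ i₃ → i₂ ≠ i₃ →
        (CyclicallyOriented (r i₁) (r i₂) (r i₃) ↔
          CyclicallyOriented (b (π i₁)) (b (π i₂)) (b (π i₃)))) := by
  classical
  have hrinj : Function.Injective r := by
    intro i j h
    have h2 := @hdist (Sum.inl (Sum.inl i)) (Sum.inl (Sum.inl j)) (by simpa using h)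
    simpa using h2
  have hbinj : Function.Injective b := by
    intro i j h
    have h2 := @hdist (Sum.inl (Sum.inr i)) (Sum.inl (Sum.inr j)) (by simpa using h)
    simpa using h2
  obtain ⟨c, hcvol, hcmin⟩ := CMAux.median L r b
  set T : Set ℝ := (Set.range r ∪ Set.range b) ∪ {1} with hTdef
  have hTfin : T.Finite :=
    ((Set.finite_range r).union (Set.finite_range b)).union (Set.finite_singleton 1)
  have hTzero : volume T = 0 := hTfin.measure_zero volume
  have hSne : (({t | Fzed L r b t = c} ∩ Set.Ioc (0:ℝ) 1) \ T).Nonempty := by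
    apply MeasureTheory.nonempty_of_measure_ne_zero (μ := volume)
    intro h0
    apply hcvol
    have hsub : {t | Fzed L r b t = c} ∩ Set.Ioc (0:ℝ) 1 ⊆
        (({t | Fzed L r b t = c} ∩ Set.Ioc (0:ℝ) 1) \ T) ∪ T := fun t ht => by
      by_cases h : t ∈ T
      · exact Or.inr h
      · exact Or.inl ⟨ht, h⟩
    have := le_trans (measure_mono (μ := volume) hsub) (measure_union_le _ _)
    rw [h0, hTzero, add_zero] at this
    exact le_antisymm this zero_le
  obtain ⟨t0, ⟨hFt0, ht0Ioc⟩, ht0T⟩ := hSne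
  have ht0ne1 : t0 ≠ 1 := fun h => ht0T (Or.inr (by rw [h]; rfl))
  have ht0Ioo : t0 ∈ Set.Ioo (0:ℝ) 1 := ⟨ht0Ioc.1, lt_of_le_of_ne ht0Ioc.2 ht0ne1⟩
  have ht0r : ∀ i, r i ≠ t0 := fun i h => ht0T (Or.inl (Or.inl ⟨i, h⟩))
  have ht0b : ∀ i, b i ≠ t0 := fun i h => ht0T (Or.inl (Or.inr ⟨i, h⟩))
  have hFRt0 : FR L r b t0 = (c:ℝ) := by
    rw [CMAux.FR_eq]
    exact_mod_cast congrArg (fun z : ℤ => (z:ℝ)) (show Fzed L r b t0 = c from hFt0)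
  obtain ⟨ρ, hcost, hcyc⟩ :=
    CMAux.upper_bound L r b hr hb hrinj hbinj t0 ht0Ioo ht0r ht0b
  refine ⟨ρ, ?_, hcyc⟩
  intro π'
  simp only [Real.rpow_one]
  obtain ⟨cc, hlow⟩ := CMAux.lower_bound L r b hr hb π'
  calc ∑ i, circleDist (r i) (b (ρ i))
      ≤ ∫ t in Set.Ioc (0:ℝ) 1, |FR L r b t - FR L r b t0| := hcost
    _ = ∫ t in Set.Ioc (0:ℝ) 1, |FR L r b t - (c:ℝ)| := by rw [hFRt0]
    _ ≤ ∫ t in Set.Ioc (0:ℝ) 1, |FR L r b t - (cc:ℝ)| := hcmin cc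
    _ ≤ ∑ i, circleDist (r i) (b (π' i)) := hlow
end

section
/- For all reals a, b, c > 0, the Gaussian probability density p(x, y) = √((a+b+c)/(a·b·c)) · (2π)^{−1} · exp(−x²/(2a) − (x−y)²/(2b) − y²/(2c)) satisfies ∫_{x ≥ 0} ∫_{y ≥ 0} p(x, y) dx dy = 1/4 + (1/(2π)) · arctan √(a·c / (b·(a+b+c))). -/
open Real MeasureTheory Set

lemma radial_integral : ∫ r in Set.Ioi (0:ℝ), r * Real.exp (-r ^ 2 / 2) = 1 := by
  have h : ∀ x ∈ Set.Ioi (0:ℝ), HasDerivAt (fun r : ℝ => -Real.exp (-r ^ 2 / 2))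
      (x * Real.exp (-x ^ 2 / 2)) x := by
    intro x _
    have h1 : HasDerivAt (fun r : ℝ => -r ^ 2 / 2) (-x) x := by
      have := ((hasDerivAt_pow 2 x).neg).div_const 2
      refine this.congr_deriv ?_
      push_cast
      ring
    have := (h1.exp).neg
    refine this.congr_deriv ?_
    ring
  have hint : IntegrableOn (fun r : ℝ => r * Real.exp (-r ^ 2 / 2)) (Set.Ioi 0) := by
    have := (integrable_mul_exp_neg_mul_sq (b := 1/2) (by norm_num)).integrableOn
      (s := Set.Ioi (0:ℝ))
    apply this.congr_fun ?_ measurableSet_Ioi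
    intro x _
    ring_nf
  have htend : Filter.Tendsto (fun r : ℝ => -Real.exp (-r ^ 2 / 2)) Filter.atTop (nhds 0) := by
    rw [show (0:ℝ) = -0 by ring]
    apply Filter.Tendsto.neg
    apply Real.tendsto_exp_atBot.comp
    have : Filter.Tendsto (fun r : ℝ => -r ^ 2 / 2) Filter.atTop Filter.atBot := by
      apply Filter.Tendsto.atBot_div_const (by norm_num)
      exact Filter.tendsto_neg_atBot_iff.2 (Filter.tendsto_pow_atTop two_ne_zero)
    exact this
  have := integral_Ioi_of_hasDerivAt_of_tendsto (Continuous.continuousWithinAt (by continuity)) h hint htend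
  simpa using this

lemma angle_iff (k : ℝ) (hk : 0 < k) (φ : ℝ) (hφ : φ ∈ Set.Ioo (-π) π) :
    (0 < Real.sin φ ∧ 0 < Real.cos φ + k * Real.sin φ) ↔
      φ ∈ Set.Ioo 0 (π / 2 + Real.arctan k) := by
  have ht0 : 0 < Real.arctan k := by
    simpa using Real.arctan_strictMono hk
  have ht2 : Real.arctan k < π / 2 := Real.arctan_lt_pi_div_two k
  have hc : (0:ℝ) < Real.sqrt (1 + k ^ 2) := Real.sqrt_pos.2 (by positivity)
  have key : Real.cos φ + k * Real.sin φ = Real.sqrt (1 + k ^ 2) * Real.cos (φ - Real.arctan k) := by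
    rw [Real.cos_sub, Real.cos_arctan, Real.sin_arctan]
    field_simp
  constructor
  · rintro ⟨h1, h2⟩
    have hφ0 : 0 < φ := by
      by_contra h
      push_neg at h
      exact absurd h1 (not_lt.2 (Real.sin_nonpos_of_nonpos_of_neg_pi_le h hφ.1.le))
    refine ⟨hφ0, ?_⟩
    by_contra h
    push_neg at h
    have : Real.cos (φ - Real.arctan k) ≤ 0 := by
      apply Real.cos_nonpos_of_pi_div_two_le_of_le
      · linarith
      · linarith [hφ.2, Real.pi_pos]
    nlinarith [key, h2]
  · rintro ⟨h1, h2⟩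
    have hs : 0 < Real.sin φ := Real.sin_pos_of_pos_of_lt_pi h1 (by linarith)
    refine ⟨hs, ?_⟩
    rw [key]
    have : 0 < Real.cos (φ - Real.arctan k) := by
      apply Real.cos_pos_of_mem_Ioo
      constructor <;> linarith
    positivity

lemma sector_integral (k : ℝ) (hk : 0 < k) :
    ∫ p : ℝ × ℝ in {q : ℝ × ℝ | 0 < q.2 ∧ 0 < q.1 + k * q.2},
      Real.exp (-(p.1 ^ 2 + p.2 ^ 2) / 2) = π / 2 + Real.arctan k := by
  have ht0 : 0 < Real.arctan k := by simpa using Real.arctan_strictMono hk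
  have ht2 : Real.arctan k < π / 2 := Real.arctan_lt_pi_div_two k
  have hπ : 0 < π := Real.pi_pos
  set θ : ℝ := π / 2 + Real.arctan k with hθdef
  have hθ0 : 0 < θ := by positivity
  have hθπ : θ < π := by simp only [hθdef]; linarith
  set S : Set (ℝ × ℝ) := {q : ℝ × ℝ | 0 < q.2 ∧ 0 < q.1 + k * q.2} with hSdef
  have hSopen : IsOpen S := by
    apply IsOpen.inter
    · exact isOpen_lt continuous_const continuous_snd
    · exact isOpen_lt continuous_const (continuous_fst.add (continuous_const.mul continuous_snd))
  set f : ℝ × ℝ → ℝ := fun p => Real.exp (-(p.1 ^ 2 + p.2 ^ 2) / 2) with hfdef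
  have h1 : ∫ p in S, f p = ∫ p : ℝ × ℝ, S.indicator f p :=
    (integral_indicator hSopen.measurableSet).symm
  rw [h1, ← integral_comp_polarCoord_symm, polarCoord_target]
  have h2 : ∀ p ∈ Set.Ioi (0:ℝ) ×ˢ Set.Ioo (-π) π,
      p.1 • (S.indicator f (polarCoord.symm p)) =
        (p.1 * Real.exp (-p.1 ^ 2 / 2)) * (Set.Ioo (0:ℝ) θ).indicator (fun _ => (1:ℝ)) p.2 := by
    rintro ⟨r, φ⟩ ⟨hr, hφ⟩
    simp only [Set.mem_Ioi] at hr
    have hmem : polarCoord.symm (r, φ) ∈ S ↔ φ ∈ Set.Ioo 0 θ := by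
      rw [← angle_iff k hk φ hφ]
      simp only [hSdef, polarCoord_symm_apply, Set.mem_setOf_eq]
      constructor
      · rintro ⟨u, v⟩
        constructor
        · nlinarith
        · nlinarith
      · rintro ⟨u, v⟩
        constructor
        · nlinarith
        · nlinarith
    by_cases hφθ : φ ∈ Set.Ioo 0 θ
    · rw [Set.indicator_of_mem (hmem.2 hφθ), Set.indicator_of_mem hφθ]
      simp only [hfdef, polarCoord_symm_apply, smul_eq_mul]
      rw [show (r * Real.cos φ) ^ 2 + (r * Real.sin φ) ^ 2
            = r ^ 2 * (Real.sin φ ^ 2 + Real.cos φ ^ 2) from by ring,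
        Real.sin_sq_add_cos_sq, mul_one]
      ring
    · rw [Set.indicator_of_notMem (fun h => hφθ (hmem.1 h)), Set.indicator_of_notMem hφθ]
      simp
  rw [setIntegral_congr_fun ((isOpen_Ioi.prod isOpen_Ioo).measurableSet) h2]
  rw [Measure.volume_eq_prod, setIntegral_prod_mul (fun r : ℝ => r * Real.exp (-r ^ 2 / 2))
    (fun φ => (Set.Ioo (0:ℝ) θ).indicator (fun _ => (1:ℝ)) φ), radial_integral, one_mul]
  rw [setIntegral_indicator measurableSet_Ioo,
    Set.inter_eq_self_of_subset_right (Set.Ioo_subset_Ioo (by linarith) (by linarith))]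
  simp [Real.volume_Ioo, ENNReal.toReal_ofReal hθ0.le, hθ0.le]

lemma quadrant_integral (sA m sD : ℝ) (hsA : 0 < sA) (hm : 0 < m) (hsD : 0 < sD) :
    ∫ p : ℝ × ℝ in Set.Ioi (0:ℝ) ×ˢ Set.Ioi (0:ℝ),
      Real.exp (-((sA * p.1 - m * p.2) ^ 2 + (sD * p.2) ^ 2) / 2)
      = (π / 2 + Real.arctan (m / sD)) / (sA * sD) := by
  set k : ℝ := m / sD with hkdef
  have hk : 0 < k := by positivity
  set L : ℝ × ℝ →L[ℝ] ℝ × ℝ :=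
    LinearMap.toContinuousLinearMap (Matrix.toLin (Module.Basis.finTwoProd ℝ) (Module.Basis.finTwoProd ℝ)
      !![sA, -m; 0, sD]) with hLdef
  have hLapply : ∀ p : ℝ × ℝ, L p = (sA * p.1 - m * p.2, sD * p.2) := by
    intro p
    simp only [hLdef, LinearMap.coe_toContinuousLinearMap', Matrix.toLin_finTwoProd_apply]
    rw [Prod.mk.injEq]
    constructor <;> ring
  have hLdet : L.det = sA * sD := by
    simp only [hLdef, ContinuousLinearMap.det, LinearMap.coe_toContinuousLinearMap,
      LinearMap.det_toLin, Matrix.det_fin_two_of]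
    ring
  have hQ : MeasurableSet (Set.Ioi (0:ℝ) ×ˢ Set.Ioi (0:ℝ)) :=
    measurableSet_Ioi.prod measurableSet_Ioi
  have hderiv : ∀ p ∈ Set.Ioi (0:ℝ) ×ˢ Set.Ioi (0:ℝ),
      HasFDerivWithinAt (⇑L) L (Set.Ioi (0:ℝ) ×ˢ Set.Ioi (0:ℝ)) p :=
    fun p _ => L.hasFDerivAt.hasFDerivWithinAt
  have hinj : Set.InjOn (⇑L) (Set.Ioi (0:ℝ) ×ˢ Set.Ioi (0:ℝ)) := by
    intro p _ q _ h
    rw [hLapply, hLapply, Prod.mk.injEq] at h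
    obtain ⟨h1, h2⟩ := h
    have hy : p.2 = q.2 := mul_left_cancel₀ hsD.ne' h2
    have hx : p.1 = q.1 := by
      rw [hy] at h1
      exact mul_left_cancel₀ hsA.ne' (by linarith)
    exact Prod.ext hx hy
  have himg : (⇑L) '' (Set.Ioi (0:ℝ) ×ˢ Set.Ioi (0:ℝ)) =
      {q : ℝ × ℝ | 0 < q.2 ∧ 0 < q.1 + k * q.2} := by
    ext ⟨u, v⟩
    constructor
    · rintro ⟨⟨x, y⟩, ⟨hx, hy⟩, heq⟩
      simp only [Set.mem_Ioi] at hx hy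
      rw [hLapply] at heq
      rw [← heq]
      refine ⟨by positivity, ?_⟩
      have : sA * x - m * y + k * (sD * y) = sA * x := by
        rw [hkdef]; field_simp
        ring
      simp only [Set.mem_setOf_eq]
      rw [this]
      positivity
    · rintro ⟨h1, h2⟩
      refine ⟨((u + m * (v / sD)) / sA, v / sD), ⟨?_, ?_⟩, ?_⟩
      · simp only [Set.mem_Ioi]
        have h2' : 0 < u + m * (v / sD) := by
          have : k * v = m * (v / sD) := by rw [hkdef]; field_simp
          linarith [h2, this ▸ h2]
        positivity
      · simp only [Set.mem_Ioi]; positivity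
      · rw [hLapply]
        simp only [Prod.mk.injEq]
        constructor <;> field_simp <;> ring
  have key := integral_image_eq_integral_abs_det_fderiv_smul volume hQ hderiv hinj
    (fun q : ℝ × ℝ => Real.exp (-(q.1 ^ 2 + q.2 ^ 2) / 2))
  rw [himg, sector_integral k hk] at key
  have : ∀ p : ℝ × ℝ, |(L : ℝ × ℝ →L[ℝ] ℝ × ℝ).det| •
      Real.exp (-((L p).1 ^ 2 + (L p).2 ^ 2) / 2)
      = (sA * sD) * Real.exp (-((sA * p.1 - m * p.2) ^ 2 + (sD * p.2) ^ 2) / 2) := by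
    intro p
    rw [hLapply, hLdet, smul_eq_mul, abs_of_pos (by positivity)]
  simp_rw [this] at key
  rw [integral_const_mul] at key
  have hne : sA * sD ≠ 0 := by positivity
  field_simp at key ⊢
  linarith [key]


open Real in
/-- For `a, b, c > 0`, the probability that both values of the bivariate Gaussian with
density `√((a+b+c)/(abc))·(2π)⁻¹·exp(−x²/(2a) − (x−y)²/(2b) − y²/(2c))` are
nonnegative equals `1/4 + (1/(2π))·arctan √(ac/(b(a+b+c)))`. -/
theorem gaussian_quadrant_probability
    (a b c : ℝ) (ha : 0 < a) (hb : 0 < b) (hc : 0 < c) :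
    ∫ x in Set.Ici (0 : ℝ), ∫ y in Set.Ici (0 : ℝ),
        Real.sqrt ((a + b + c) / (a * b * c)) / (2 * π) *
          Real.exp (-(x ^ 2 / (2 * a)) - (x - y) ^ 2 / (2 * b) - y ^ 2 / (2 * c))
      = 1 / 4 + (1 / (2 * π)) * Real.arctan (Real.sqrt (a * c / (b * (a + b + c)))) := by
  have hπ : 0 < π := Real.pi_pos
  have hab : 0 < a + b := by linarith
  have habc : 0 < a + b + c := by linarith
  set sA : ℝ := Real.sqrt ((a + b) / (a * b)) with hsAdef
  set m : ℝ := Real.sqrt (a / (b * (a + b))) with hmdef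
  set sD : ℝ := Real.sqrt ((a + b + c) / (c * (a + b))) with hsDdef
  have hsA : 0 < sA := Real.sqrt_pos.2 (by positivity)
  have hm : 0 < m := Real.sqrt_pos.2 (by positivity)
  have hsD : 0 < sD := Real.sqrt_pos.2 (by positivity)
  have hsA2 : sA ^ 2 = (a + b) / (a * b) := Real.sq_sqrt (by positivity)
  have hm2 : m ^ 2 = a / (b * (a + b)) := Real.sq_sqrt (by positivity)
  have hsD2 : sD ^ 2 = (a + b + c) / (c * (a + b)) := Real.sq_sqrt (by positivity)
  have hsAm : sA * m = 1 / b := by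
    rw [hsAdef, hmdef, ← Real.sqrt_mul (by positivity)]
    rw [show (a + b) / (a * b) * (a / (b * (a + b))) = (1 / b) ^ 2 by field_simp]
    exact Real.sqrt_sq (by positivity)
  have hprod : sA * sD = Real.sqrt ((a + b + c) / (a * b * c)) := by
    rw [hsAdef, hsDdef, ← Real.sqrt_mul (by positivity)]
    congr 1
    field_simp
  have hkval : m / sD = Real.sqrt (a * c / (b * (a + b + c))) := by
    rw [show a * c / (b * (a + b + c)) = (m / sD) ^ 2 by
      rw [div_pow, hm2, hsD2]; field_simp]
    exact (Real.sqrt_sq (by positivity)).symm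
  -- the pointwise identity for the exponent
  have hexp : ∀ x y : ℝ,
      -(x ^ 2 / (2 * a)) - (x - y) ^ 2 / (2 * b) - y ^ 2 / (2 * c)
        = -((sA * x - m * y) ^ 2 + (sD * y) ^ 2) / 2 := by
    intro x y
    have expand : (sA * x - m * y) ^ 2 + (sD * y) ^ 2
        = sA ^ 2 * x ^ 2 - 2 * (sA * m) * (x * y) + (m ^ 2 + sD ^ 2) * y ^ 2 := by ring
    rw [expand, hsA2, hsAm, hm2, hsD2]
    field_simp
    ring
  -- integrability
  have hcont : Continuous (fun p : ℝ × ℝ =>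
      Real.exp (-(p.1 ^ 2 / (2 * a)) - (p.1 - p.2) ^ 2 / (2 * b) - p.2 ^ 2 / (2 * c))) := by
    fun_prop
  have hint : Integrable (fun p : ℝ × ℝ =>
      Real.exp (-(p.1 ^ 2 / (2 * a)) - (p.1 - p.2) ^ 2 / (2 * b) - p.2 ^ 2 / (2 * c))) := by
    have hbd : Integrable (fun p : ℝ × ℝ =>
        Real.exp (-(1 / (2 * a)) * p.1 ^ 2) * Real.exp (-(1 / (2 * c)) * p.2 ^ 2)) := by
      rw [Measure.volume_eq_prod]
      exact (integrable_exp_neg_mul_sq (by positivity)).mul_prod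
        (integrable_exp_neg_mul_sq (by positivity))
    apply hbd.mono' hcont.aestronglyMeasurable
    filter_upwards with p
    rw [Real.norm_eq_abs, Real.abs_exp, ← Real.exp_add]
    apply Real.exp_le_exp.2
    have h1 : 0 ≤ (p.1 - p.2) ^ 2 / (2 * b) := by positivity
    have e1 : -(p.1 ^ 2 / (2 * a)) = -(1 / (2 * a)) * p.1 ^ 2 := by ring
    have e2 : -(p.2 ^ 2 / (2 * c)) = -(1 / (2 * c)) * p.2 ^ 2 := by ring
    nlinarith
  -- main computation
  simp_rw [MeasureTheory.integral_Ici_eq_integral_Ioi, MeasureTheory.integral_const_mul]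
  rw [← setIntegral_prod _ (hint.integrableOn)]
  have congr1 : ∫ p : ℝ × ℝ in Set.Ioi (0:ℝ) ×ˢ Set.Ioi (0:ℝ),
      Real.exp (-(p.1 ^ 2 / (2 * a)) - (p.1 - p.2) ^ 2 / (2 * b) - p.2 ^ 2 / (2 * c))
      = ∫ p : ℝ × ℝ in Set.Ioi (0:ℝ) ×ˢ Set.Ioi (0:ℝ),
        Real.exp (-((sA * p.1 - m * p.2) ^ 2 + (sD * p.2) ^ 2) / 2) := by
    apply integral_congr_ae
    filter_upwards with p
    rw [hexp p.1 p.2]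
  rw [← Measure.volume_eq_prod, congr1, quadrant_integral sA m sD hsA hm hsD, hkval, ← hprod]
  have hs : sA * sD ≠ 0 := by positivity
  field_simp
  ring
end

section
/- For all reals a, b, c > 0, the Gaussian probability density p(x, y) = √((a+b+c)/(a·b·c)) · (2π)^{−1} · exp(−x²/(2a) − (x−y)²/(2b) − y²/(2c)) satisfies ∫_ℝ ∫_ℝ sgn(x·y) · p(x, y) dx dy = (2/π) · arctan √(a·c / (b·(a+b+c))). This is the two-point spin correlation function G(a, b, c) of the optimal matching with open boundary conditions at criticality, in the continuum limit. -/
open Real MeasureTheory Set Filter intervalIntegral Topology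

namespace GaussianSignAux

lemma measurable_sign : Measurable Real.sign := by
  have h : Real.sign = fun r : ℝ => if r < 0 then (-1:ℝ) else if 0 < r then 1 else 0 := by
    funext r; rfl
  rw [h]
  exact Measurable.ite (measurableSet_lt measurable_id' measurable_const) measurable_const
    (Measurable.ite (measurableSet_lt measurable_const measurable_id') measurable_const
      measurable_const)

lemma abs_sign_le_one (x : ℝ) : |Real.sign x| ≤ 1 := by
  rcases Real.sign_apply_eq x with h | h | h <;> rw [h] <;> norm_num

lemma sign_mul_pos_left {r : ℝ} (hr : 0 < r) (x : ℝ) : Real.sign (r * x) = Real.sign x := by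
  rcases lt_trichotomy x 0 with h | h | h
  · rw [Real.sign_of_neg h, Real.sign_of_neg (mul_neg_of_pos_of_neg hr h)]
  · simp [h]
  · rw [Real.sign_of_pos h, Real.sign_of_pos (mul_pos hr h)]

/-- 1D Gaussian moment: `∫_{0}^{∞} r e^{-k r²} dr = 1/(2k)`. -/
lemma integral_Ioi_mul_exp_neg_mul_sq {k : ℝ} (hk : 0 < k) :
    ∫ r in Ioi (0:ℝ), r * Real.exp (-k * r ^ 2) = 1 / (2 * k) := by
  have hderiv : ∀ x ∈ Ioi (0:ℝ),
      HasDerivAt (fun r : ℝ => -Real.exp (-k * r ^ 2) / (2 * k))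
        (x * Real.exp (-k * x ^ 2)) x := by
    intro x _
    have h1 : HasDerivAt (fun r : ℝ => -k * r ^ 2) (-k * (2 * x)) x := by
      simpa using ((hasDerivAt_pow 2 x).const_mul (-k))
    have h2 := (h1.exp.neg).div_const (2 * k)
    refine h2.congr_deriv ?_
    rw [div_eq_iff (by positivity : (2 * k) ≠ 0)]
    ring
  have hint : IntegrableOn (fun r : ℝ => r * Real.exp (-k * r ^ 2)) (Ioi 0) :=
    (integrable_mul_exp_neg_mul_sq hk).integrableOn
  have htend : Tendsto (fun r : ℝ => -Real.exp (-k * r ^ 2) / (2 * k)) atTop (𝓝 0) := by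
    have h1 : Tendsto (fun r : ℝ => -k * r ^ 2) atTop atBot := by
      apply Tendsto.const_mul_atTop_of_neg (neg_neg_iff_pos.mpr hk)
      exact tendsto_pow_atTop (by norm_num)
    have := (Real.tendsto_exp_atBot.comp h1).neg.div_const (2 * k)
    simpa using this
  have hcont : ContinuousWithinAt (fun r : ℝ => -Real.exp (-k * r ^ 2) / (2 * k)) (Ici 0) 0 := by
    apply Continuous.continuousWithinAt
    continuity
  have := integral_Ioi_of_hasDerivAt_of_tendsto hcont hderiv hint htend
  rw [this]
  norm_num
  ring


/-- Improper FTC on a bounded interval, with limits of the antiderivative at both endpoints. -/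
lemma integral_of_hasDerivAt_of_tendsto_Ioo {A B : ℝ} (hAB : A < B) {g F : ℝ → ℝ}
    (hg : Continuous g) (hF : ∀ x ∈ Ioo A B, HasDerivAt F (g x) x)
    {LA LB : ℝ} (hA : Tendsto F (𝓝[>] A) (𝓝 LA)) (hB : Tendsto F (𝓝[<] B) (𝓝 LB)) :
    ∫ x in A..B, g x = LB - LA := by
  set Φ : ℝ → ℝ := fun t => ∫ x in A..t, g x with hΦdef
  have hΦ : Continuous Φ :=
    intervalIntegral.continuous_primitive (fun u v => hg.intervalIntegrable u v) A
  set m : ℝ := (A + B) / 2 with hm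
  have hmA : A < m := by rw [hm]; linarith
  have hmB : m < B := by rw [hm]; linarith
  have key : ∀ t ∈ Ioo A B, Φ t = Φ m + (F t - F m) := by
    intro t ht
    have hsub : uIcc m t ⊆ Ioo A B := by
      intro x hx
      rw [Set.mem_uIcc] at hx
      constructor
      · rcases hx with ⟨h1, _⟩ | ⟨h1, _⟩ <;> [linarith; linarith [ht.1]]
      · rcases hx with ⟨_, h2⟩ | ⟨_, h2⟩ <;> [linarith [ht.2]; linarith]
    have h1 : ∫ x in m..t, g x = F t - F m :=
      intervalIntegral.integral_eq_sub_of_hasDerivAt (fun x hx => hF x (hsub hx))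
        (hg.intervalIntegrable _ _)
    have h2 : Φ m + ∫ x in m..t, g x = Φ t :=
      intervalIntegral.integral_add_adjacent_intervals (hg.intervalIntegrable A m)
        (hg.intervalIntegrable m t)
    rw [h1] at h2
    linarith
  have hBB : Φ B = Φ m + (LB - F m) := by
    have h1 : Tendsto Φ (𝓝[<] B) (𝓝 (Φ B)) := (hΦ.tendsto B).mono_left nhdsWithin_le_nhds
    have h2 : Tendsto (fun t => Φ m + (F t - F m)) (𝓝[<] B) (𝓝 (Φ m + (LB - F m))) :=
      tendsto_const_nhds.add (hB.sub tendsto_const_nhds)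
    have heq : ∀ᶠ t in 𝓝[<] B, Φ t = Φ m + (F t - F m) := by
      filter_upwards [Ioo_mem_nhdsLT_of_mem (Set.mem_Ioc.mpr ⟨hmB, le_refl B⟩)] with t ht
      exact key t ⟨lt_trans hmA ht.1, ht.2⟩
    exact tendsto_nhds_unique h1 (h2.congr' (heq.mono fun t h => h.symm))
  have hAA : (0:ℝ) = Φ m + (LA - F m) := by
    have h1 : Tendsto Φ (𝓝[>] A) (𝓝 (Φ A)) := (hΦ.tendsto A).mono_left nhdsWithin_le_nhds
    have hΦA : Φ A = 0 := intervalIntegral.integral_same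
    rw [hΦA] at h1
    have h2 : Tendsto (fun t => Φ m + (F t - F m)) (𝓝[>] A) (𝓝 (Φ m + (LA - F m))) :=
      tendsto_const_nhds.add (hA.sub tendsto_const_nhds)
    have heq : ∀ᶠ t in 𝓝[>] A, Φ t = Φ m + (F t - F m) := by
      filter_upwards [Ioo_mem_nhdsGT_of_mem (Set.mem_Ico.mpr ⟨le_refl A, hmA⟩)] with t ht
      exact key t ⟨ht.1, lt_trans ht.2 hmB⟩
    exact tendsto_nhds_unique h1 (h2.congr' (heq.mono fun t h => h.symm))
  have : ∫ x in A..B, g x = Φ B := rfl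
  rw [this, hBB]
  linarith


noncomputable section

/-- The angular quadratic form. -/
def q (a b c θ : ℝ) : ℝ := cos θ ^ 2 / a + (cos θ - sin θ) ^ 2 / b + sin θ ^ 2 / c

/-- Square root of the determinant. -/
def sD (a b c : ℝ) : ℝ := Real.sqrt ((a + b + c) / (a * b * c))

/-- The antiderivative of `1/q` on branches of `tan`. -/
def H (a b c θ : ℝ) : ℝ :=
  arctan (((1 / b + 1 / c) * tan θ - 1 / b) / sD a b c) / sD a b c

variable {a b c : ℝ}

lemma sD_pos (ha : 0 < a) (hb : 0 < b) (hc : 0 < c) : 0 < sD a b c := by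
  apply Real.sqrt_pos.mpr; positivity

lemma sD_sq (ha : 0 < a) (hb : 0 < b) (hc : 0 < c) :
    sD a b c ^ 2 = (a + b + c) / (a * b * c) := by
  rw [sD, Real.sq_sqrt (by positivity)]

lemma q_cont (ha : 0 < a) (hb : 0 < b) (hc : 0 < c) : Continuous (q a b c) := by
  unfold q; fun_prop

lemma q_lb (ha : 0 < a) (hb : 0 < b) (hc : 0 < c) (θ : ℝ) :
    min (1 / a) (1 / c) ≤ q a b c θ := by
  have h1 : min (1 / a) (1 / c) * cos θ ^ 2 ≤ 1 / a * cos θ ^ 2 :=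
    mul_le_mul_of_nonneg_right (min_le_left _ _) (sq_nonneg _)
  have h2 : min (1 / a) (1 / c) * sin θ ^ 2 ≤ 1 / c * sin θ ^ 2 :=
    mul_le_mul_of_nonneg_right (min_le_right _ _) (sq_nonneg _)
  have h3 : (0:ℝ) ≤ (cos θ - sin θ) ^ 2 / b := by positivity
  have h4 : sin θ ^ 2 + cos θ ^ 2 = 1 := sin_sq_add_cos_sq θ
  have e1 : 1 / a * cos θ ^ 2 = cos θ ^ 2 / a := by ring
  have e2 : 1 / c * sin θ ^ 2 = sin θ ^ 2 / c := by ring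
  have h5 : (1 / a ⊓ 1 / c) * sin θ ^ 2 + (1 / a ⊓ 1 / c) * cos θ ^ 2 = 1 / a ⊓ 1 / c := by
    have : (1 / a ⊓ 1 / c) * sin θ ^ 2 + (1 / a ⊓ 1 / c) * cos θ ^ 2
        = (1 / a ⊓ 1 / c) * (sin θ ^ 2 + cos θ ^ 2) := by ring
    rw [this, h4, mul_one]
  unfold q
  linarith [h1, h2, h3]

lemma q_pos (ha : 0 < a) (hb : 0 < b) (hc : 0 < c) (θ : ℝ) : 0 < q a b c θ :=
  lt_of_lt_of_le (lt_min (by positivity) (by positivity)) (q_lb ha hb hc θ)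

lemma H_hasDerivAt (ha : 0 < a) (hb : 0 < b) (hc : 0 < c) {θ : ℝ} (hcos : cos θ ≠ 0) :
    HasDerivAt (H a b c) (1 / q a b c θ) θ := by
  set s := sD a b c with hs
  have hspos : 0 < s := sD_pos ha hb hc
  have hs2 : s ^ 2 = (a + b + c) / (a * b * c) := sD_sq ha hb hc
  set γ : ℝ := 1 / b + 1 / c with hγ
  have htan : HasDerivAt tan (1 / cos θ ^ 2) θ := Real.hasDerivAt_tan hcos
  have hu : HasDerivAt (fun x => (γ * tan x - 1 / b) / s)
      (γ * (1 / cos θ ^ 2) / s) θ := ((htan.const_mul γ).sub_const (1 / b)).div_const s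
  have harc := (Real.hasDerivAt_arctan ((γ * tan θ - 1 / b) / s)).comp θ hu
  have hH := harc.div_const s
  refine hH.congr_deriv ?_
  symm
  have hq := q_pos ha hb hc θ
  have habs : ∀ u v : ℝ, 1 / (1 + (u / s) ^ 2) * (γ * v / s) / s = γ * v / (s ^ 2 + u ^ 2) := by
    intro u v
    have e1 : 1 + (u / s) ^ 2 = (s ^ 2 + u ^ 2) / s ^ 2 := by field_simp
    rw [e1]; field_simp
  rw [habs, hs2]
  rw [hγ]
  have hden : (0:ℝ) < (a + b + c) / (a * b * c) + ((1 / b + 1 / c) * tan θ - 1 / b) ^ 2 := by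
    positivity
  unfold q at hq ⊢
  rw [div_eq_div_iff hq.ne' hden.ne', Real.tan_eq_sin_div_cos]
  field_simp
  ring


lemma H_tendsto_right (ha : 0 < a) (hb : 0 < b) (hc : 0 < c) :
    Tendsto (H a b c) (𝓝[<] (π / 2)) (𝓝 (π / 2 / sD a b c)) := by
  have hspos : 0 < sD a b c := sD_pos ha hb hc
  have hγ : 0 < 1 / b + 1 / c := by positivity
  have h1 : Tendsto (fun θ => ((1 / b + 1 / c) * tan θ - 1 / b) / sD a b c)
      (𝓝[<] (π / 2)) atTop := by
    apply Tendsto.atTop_div_const hspos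
    apply tendsto_atTop_add_const_right
    exact (Real.tendsto_tan_pi_div_two).const_mul_atTop hγ
  have h2 : Tendsto (fun θ => arctan (((1 / b + 1 / c) * tan θ - 1 / b) / sD a b c))
      (𝓝[<] (π / 2)) (𝓝 (π / 2)) :=
    (Real.tendsto_arctan_atTop.mono_right nhdsWithin_le_nhds).comp h1
  exact h2.div_const _

lemma H_tendsto_left (ha : 0 < a) (hb : 0 < b) (hc : 0 < c) :
    Tendsto (H a b c) (𝓝[>] (-(π / 2))) (𝓝 (-(π / 2) / sD a b c)) := by
  have hspos : 0 < sD a b c := sD_pos ha hb hc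
  have hγ : 0 < 1 / b + 1 / c := by positivity
  have h1 : Tendsto (fun θ => ((1 / b + 1 / c) * tan θ - 1 / b) / sD a b c)
      (𝓝[>] (-(π / 2))) atBot := by
    apply Tendsto.atBot_div_const hspos
    apply tendsto_atBot_add_const_right
    exact (Real.tendsto_tan_neg_pi_div_two).const_mul_atBot hγ
  have h2 : Tendsto (fun θ => arctan (((1 / b + 1 / c) * tan θ - 1 / b) / sD a b c))
      (𝓝[>] (-(π / 2))) (𝓝 (-(π / 2))) :=
    (Real.tendsto_arctan_atBot.mono_right nhdsWithin_le_nhds).comp h1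
  exact h2.div_const _

lemma H_continuousAt (ha : 0 < a) (hb : 0 < b) (hc : 0 < c) {θ : ℝ} (hcos : cos θ ≠ 0) :
    ContinuousAt (H a b c) θ := by
  unfold H
  apply ContinuousAt.div_const
  apply Real.continuous_arctan.continuousAt.comp
  apply ContinuousAt.div_const
  exact ((Real.continuousAt_tan.mpr hcos).const_mul _).sub continuousAt_const

lemma integral_one_div_q_right (ha : 0 < a) (hb : 0 < b) (hc : 0 < c) :
    ∫ x in (0:ℝ)..(π / 2), 1 / q a b c x = π / 2 / sD a b c - H a b c 0 := by
  apply integral_of_hasDerivAt_of_tendsto_Ioo (by positivity)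
  · exact continuous_const.div (q_cont ha hb hc) (fun θ => (q_pos ha hb hc θ).ne')
  · intro x hx
    have hcos : 0 < cos x := Real.cos_pos_of_mem_Ioo ⟨by linarith [hx.1, pi_pos], hx.2⟩
    exact H_hasDerivAt ha hb hc hcos.ne'
  · have : cos (0:ℝ) ≠ 0 := by simp
    exact ((H_continuousAt ha hb hc this).tendsto).mono_left nhdsWithin_le_nhds
  · exact H_tendsto_right ha hb hc

lemma integral_one_div_q_left (ha : 0 < a) (hb : 0 < b) (hc : 0 < c) :
    ∫ x in (-(π / 2))..(0:ℝ), 1 / q a b c x = H a b c 0 - -(π / 2) / sD a b c := by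
  apply integral_of_hasDerivAt_of_tendsto_Ioo (by linarith [pi_pos])
  · exact continuous_const.div (q_cont ha hb hc) (fun θ => (q_pos ha hb hc θ).ne')
  · intro x hx
    have hcos : 0 < cos x := Real.cos_pos_of_mem_Ioo ⟨hx.1, by linarith [hx.2, pi_pos]⟩
    exact H_hasDerivAt ha hb hc hcos.ne'
  · exact H_tendsto_left ha hb hc
  · have : cos (0:ℝ) ≠ 0 := by simp
    exact ((H_continuousAt ha hb hc this).tendsto).mono_left nhdsWithin_le_nhds


lemma H_zero (ha : 0 < a) (hb : 0 < b) (hc : 0 < c) :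
    H a b c 0 = -(arctan (1 / (b * sD a b c)) / sD a b c) := by
  have hs : sD a b c ≠ 0 := (sD_pos ha hb hc).ne'
  have h1 : ((1 / b + 1 / c) * tan 0 - 1 / b) / sD a b c = -(1 / (b * sD a b c)) := by
    rw [Real.tan_zero]; field_simp; ring
  unfold H
  rw [h1, Real.arctan_neg]
  ring

lemma G_intervalIntegrable (ha : 0 < a) (hb : 0 < b) (hc : 0 < c) (u v : ℝ) :
    IntervalIntegrable (fun θ => Real.sign (cos θ * sin θ) * (1 / q a b c θ)) volume u v := by
  set ε : ℝ := min (1 / a) (1 / c) with hε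
  have hεpos : 0 < ε := lt_min (by positivity) (by positivity)
  rw [intervalIntegrable_iff]
  apply Measure.integrableOn_of_bounded (M := 1 / ε)
  · exact (measure_Ioc_lt_top).ne
  · apply Measurable.aestronglyMeasurable
    apply Measurable.mul
    · exact measurable_sign.comp (Real.continuous_cos.mul Real.continuous_sin).measurable
    · exact (continuous_const.div (q_cont ha hb hc)
        (fun θ => (q_pos ha hb hc θ).ne')).measurable
  · apply ae_of_all
    intro x
    have hq := q_pos ha hb hc x
    have hlb := q_lb ha hb hc x
    rw [Real.norm_eq_abs, abs_mul]
    have h1 : |1 / q a b c x| = 1 / q a b c x := abs_of_pos (by positivity)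
    have h2 : 1 / q a b c x ≤ 1 / ε := one_div_le_one_div_of_le hεpos hlb
    calc |Real.sign (cos x * sin x)| * |1 / q a b c x|
        ≤ 1 * |1 / q a b c x| := mul_le_mul_of_nonneg_right (abs_sign_le_one _) (abs_nonneg _)
      _ = 1 / q a b c x := by rw [one_mul, h1]
      _ ≤ 1 / ε := h2

lemma theta_integral (ha : 0 < a) (hb : 0 < b) (hc : 0 < c) :
    ∫ θ in (-π)..π, Real.sign (cos θ * sin θ) * (1 / q a b c θ)
      = 4 * arctan (1 / (b * sD a b c)) / sD a b c := by
  set G : ℝ → ℝ := fun θ => Real.sign (cos θ * sin θ) * (1 / q a b c θ) with hG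
  have hper : Function.Periodic G π := by
    intro θ
    have h1 : cos (θ + π) * sin (θ + π) = cos θ * sin θ := by
      rw [Real.cos_add_pi, Real.sin_add_pi]; ring
    have h2 : q a b c (θ + π) = q a b c θ := by
      unfold q; rw [Real.cos_add_pi, Real.sin_add_pi]; ring
    simp only [hG, h1, h2]
  have hsplit : ∫ θ in (-π)..π, G θ = (∫ θ in (-π)..(0:ℝ), G θ) + ∫ θ in (0:ℝ)..π, G θ :=
    (intervalIntegral.integral_add_adjacent_intervals (G_intervalIntegrable ha hb hc _ _)
      (G_intervalIntegrable ha hb hc _ _)).symm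
  have e1 : ∫ θ in (-π)..(0:ℝ), G θ = ∫ θ in (-(π/2))..(π/2), G θ := by
    have := hper.intervalIntegral_add_eq (-π) (-(π/2))
    rw [show -π + π = (0:ℝ) by ring, show -(π/2) + π = π/2 by ring] at this
    exact this
  have e2 : ∫ θ in (0:ℝ)..π, G θ = ∫ θ in (-(π/2))..(π/2), G θ := by
    have := hper.intervalIntegral_add_eq 0 (-(π/2))
    rw [show (0:ℝ) + π = π by ring, show -(π/2) + π = π/2 by ring] at this
    exact this
  have hsplit2 : ∫ θ in (-(π/2))..(π/2), G θ
      = (∫ θ in (-(π/2))..(0:ℝ), G θ) + ∫ θ in (0:ℝ)..(π/2), G θ :=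
    (intervalIntegral.integral_add_adjacent_intervals (G_intervalIntegrable ha hb hc _ _)
      (G_intervalIntegrable ha hb hc _ _)).symm
  have hae : ∀ z : ℝ, ∀ᵐ x : ℝ ∂(volume : Measure ℝ), x ≠ z := by
    intro z
    rw [ae_iff]
    have : {x : ℝ | ¬x ≠ z} = {z} := by ext x; simp
    rw [this]
    exact measure_singleton z
  have hpos : ∫ θ in (0:ℝ)..(π/2), G θ = ∫ θ in (0:ℝ)..(π/2), 1 / q a b c θ := by
    apply intervalIntegral.integral_congr_ae
    filter_upwards [hae (π/2)] with x hx hmem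
    rw [Set.uIoc_of_le (by positivity : (0:ℝ) ≤ π/2)] at hmem
    have hx2 : x < π / 2 := lt_of_le_of_ne hmem.2 hx
    have hcos : 0 < cos x := Real.cos_pos_of_mem_Ioo ⟨by linarith [pi_pos, hmem.1], hx2⟩
    have hsin : 0 < sin x := Real.sin_pos_of_pos_of_lt_pi hmem.1 (by linarith [pi_pos])
    simp only [hG, Real.sign_of_pos (mul_pos hcos hsin), one_mul]
  have hneg : ∫ θ in (-(π/2))..(0:ℝ), G θ = -∫ θ in (-(π/2))..(0:ℝ), 1 / q a b c θ := by
    rw [← intervalIntegral.integral_neg]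
    apply intervalIntegral.integral_congr_ae
    filter_upwards [hae 0] with x hx hmem
    rw [Set.uIoc_of_le (by linarith [pi_pos] : -(π/2) ≤ (0:ℝ))] at hmem
    have hx2 : x < 0 := lt_of_le_of_ne hmem.2 hx
    have hcos : 0 < cos x := Real.cos_pos_of_mem_Ioo ⟨hmem.1, by linarith [pi_pos]⟩
    have hsin : sin x < 0 := Real.sin_neg_of_neg_of_neg_pi_lt hx2 (by linarith [pi_pos, hmem.1])
    simp only [hG, Real.sign_of_neg (mul_neg_of_pos_of_neg hcos hsin)]
    ring
  rw [hsplit, e1, e2, hsplit2, hpos, hneg, integral_one_div_q_right ha hb hc,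
    integral_one_div_q_left ha hb hc, H_zero ha hb hc]
  ring

/-- Exponent identity in polar coordinates. -/
lemma exponent_polar (ha : 0 < a) (hb : 0 < b) (hc : 0 < c) (r θ : ℝ) :
    -((r * cos θ) ^ 2 / (2 * a)) - (r * cos θ - r * sin θ) ^ 2 / (2 * b)
        - (r * sin θ) ^ 2 / (2 * c) = -(q a b c θ / 2) * r ^ 2 := by
  unfold q
  field_simp
  ring

lemma norm_sign_mul_le (x y : ℝ) (hy : 0 ≤ y) : ‖Real.sign x * y‖ ≤ y := by
  rw [Real.norm_eq_abs, abs_mul, abs_of_nonneg hy]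
  calc |Real.sign x| * y ≤ 1 * y := mul_le_mul_of_nonneg_right (abs_sign_le_one x) hy
    _ = y := one_mul y

theorem main (ha : 0 < a) (hb : 0 < b) (hc : 0 < c) :
    ∫ x : ℝ, ∫ y : ℝ,
        Real.sign (x * y) *
          (Real.sqrt ((a + b + c) / (a * b * c)) / (2 * π) *
            Real.exp (-(x ^ 2 / (2 * a)) - (x - y) ^ 2 / (2 * b) - y ^ 2 / (2 * c)))
      = (2 / π) * Real.arctan (Real.sqrt (a * c / (b * (a + b + c)))) := by
  have hπ := Real.pi_pos
  have hspos : 0 < sD a b c := sD_pos ha hb hc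
  have hC0pos : 0 < Real.sqrt ((a + b + c) / (a * b * c)) / (2 * π) := by positivity
  set C0 : ℝ := Real.sqrt ((a + b + c) / (a * b * c)) / (2 * π) with hC0
  set ε : ℝ := min (1 / a) (1 / c) with hε
  have hεpos : 0 < ε := lt_min (by positivity) (by positivity)
  -- measurability of the density
  have hφcont : Continuous (fun z : ℝ × ℝ =>
      C0 * Real.exp (-(z.1 ^ 2 / (2 * a)) - (z.1 - z.2) ^ 2 / (2 * b) - z.2 ^ 2 / (2 * c))) := by
    fun_prop
  have hφmeas : Measurable (fun z : ℝ × ℝ => Real.sign (z.1 * z.2) *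
      (C0 * Real.exp (-(z.1 ^ 2 / (2 * a)) - (z.1 - z.2) ^ 2 / (2 * b) - z.2 ^ 2 / (2 * c)))) :=
    (measurable_sign.comp (measurable_fst.mul measurable_snd)).mul hφcont.measurable
  -- integrability on the plane
  have hint : Integrable (Function.uncurry fun x y : ℝ => Real.sign (x * y) *
      (C0 * Real.exp (-(x ^ 2 / (2 * a)) - (x - y) ^ 2 / (2 * b) - y ^ 2 / (2 * c))))
      (volume.prod volume) := by
    have hg : Integrable (fun z : ℝ × ℝ =>
        C0 * (Real.exp (-(1 / (2 * a)) * z.1 ^ 2) * Real.exp (-(1 / (2 * c)) * z.2 ^ 2)))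
        (volume.prod volume) :=
      ((integrable_exp_neg_mul_sq (by positivity)).mul_prod
        (integrable_exp_neg_mul_sq (by positivity))).const_mul C0
    apply hg.mono' hφmeas.aestronglyMeasurable
    apply ae_of_all
    intro z
    have h2 : Real.exp (-(z.1 ^ 2 / (2 * a)) - (z.1 - z.2) ^ 2 / (2 * b) - z.2 ^ 2 / (2 * c))
        ≤ Real.exp (-(1 / (2 * a)) * z.1 ^ 2) * Real.exp (-(1 / (2 * c)) * z.2 ^ 2) := by
      rw [← Real.exp_add]
      apply Real.exp_le_exp.mpr
      have h3 : 0 ≤ (z.1 - z.2) ^ 2 / (2 * b) := by positivity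
      have e : -(1 / (2 * a)) * z.1 ^ 2 + -(1 / (2 * c)) * z.2 ^ 2
          = -(z.1 ^ 2 / (2 * a)) + -(z.2 ^ 2 / (2 * c)) := by ring
      rw [e]; linarith
    calc ‖Real.sign (z.1 * z.2) *
          (C0 * Real.exp (-(z.1 ^ 2 / (2 * a)) - (z.1 - z.2) ^ 2 / (2 * b) - z.2 ^ 2 / (2 * c)))‖
        ≤ C0 * Real.exp (-(z.1 ^ 2 / (2 * a)) - (z.1 - z.2) ^ 2 / (2 * b) - z.2 ^ 2 / (2 * c)) :=
          norm_sign_mul_le _ _ (by positivity)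
      _ ≤ C0 * (Real.exp (-(1 / (2 * a)) * z.1 ^ 2) * Real.exp (-(1 / (2 * c)) * z.2 ^ 2)) :=
          mul_le_mul_of_nonneg_left h2 hC0pos.le
  -- Step 1: Fubini
  have step1 : (∫ x : ℝ, ∫ y : ℝ, Real.sign (x * y) *
      (C0 * Real.exp (-(x ^ 2 / (2 * a)) - (x - y) ^ 2 / (2 * b) - y ^ 2 / (2 * c))))
      = ∫ z : ℝ × ℝ, Real.sign (z.1 * z.2) *
        (C0 * Real.exp (-(z.1 ^ 2 / (2 * a)) - (z.1 - z.2) ^ 2 / (2 * b) - z.2 ^ 2 / (2 * c))) := by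
    have h0 := MeasureTheory.integral_integral hint
    rw [← Measure.volume_eq_prod ℝ ℝ] at h0
    exact h0
  -- Step 2: polar coordinates
  have step2 : (∫ z : ℝ × ℝ, Real.sign (z.1 * z.2) *
      (C0 * Real.exp (-(z.1 ^ 2 / (2 * a)) - (z.1 - z.2) ^ 2 / (2 * b) - z.2 ^ 2 / (2 * c))))
      = ∫ p in Set.Ioi (0:ℝ) ×ˢ Set.Ioo (-π) π, p.1 * (Real.sign ((p.1 * cos p.2) * (p.1 * sin p.2)) *
        (C0 * Real.exp (-((p.1 * cos p.2) ^ 2 / (2 * a)) - (p.1 * cos p.2 - p.1 * sin p.2) ^ 2 / (2 * b)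
          - (p.1 * sin p.2) ^ 2 / (2 * c)))) := by
    rw [← integral_comp_polarCoord_symm, polarCoord_target]
    apply setIntegral_congr_fun (measurableSet_Ioi.prod measurableSet_Ioo)
    intro p _
    simp only [polarCoord_symm_apply, smul_eq_mul]
  -- integrability on the polar target
  have hΨmeas : Measurable (fun p : ℝ × ℝ => p.1 * (Real.sign ((p.1 * cos p.2) * (p.1 * sin p.2)) *
      (C0 * Real.exp (-((p.1 * cos p.2) ^ 2 / (2 * a)) - (p.1 * cos p.2 - p.1 * sin p.2) ^ 2 / (2 * b)
        - (p.1 * sin p.2) ^ 2 / (2 * c))))) := by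
    have hmap : Continuous (fun p : ℝ × ℝ => (p.1 * cos p.2, p.1 * sin p.2)) := by fun_prop
    exact measurable_fst.mul (hφmeas.comp hmap.measurable)
  have hΨint : Integrable (fun p : ℝ × ℝ => p.1 * (Real.sign ((p.1 * cos p.2) * (p.1 * sin p.2)) *
      (C0 * Real.exp (-((p.1 * cos p.2) ^ 2 / (2 * a)) - (p.1 * cos p.2 - p.1 * sin p.2) ^ 2 / (2 * b)
        - (p.1 * sin p.2) ^ 2 / (2 * c)))))
      ((volume.restrict (Set.Ioi (0:ℝ))).prod (volume.restrict (Set.Ioo (-π) π))) := by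
    have hgb : Integrable (fun z : ℝ × ℝ => C0 * ((z.1 * Real.exp (-(ε / 2) * z.1 ^ 2)) * 1))
        ((volume.restrict (Set.Ioi (0:ℝ))).prod (volume.restrict (Set.Ioo (-π) π))) :=
      (((integrable_mul_exp_neg_mul_sq (by positivity)).restrict).mul_prod
        (integrableOn_const measure_Ioo_lt_top.ne)).const_mul C0
    apply hgb.mono' hΨmeas.aestronglyMeasurable
    rw [Measure.prod_restrict]
    rw [ae_restrict_iff' (measurableSet_Ioi.prod measurableSet_Ioo)]
    apply ae_of_all
    rintro ⟨r, θ⟩ hz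
    have hr : 0 < r := hz.1
    have hqθ := q_pos ha hb hc θ
    have hlb : ε ≤ q a b c θ := q_lb ha hb hc θ
    have hexp : Real.exp (-((r * cos θ) ^ 2 / (2 * a)) - (r * cos θ - r * sin θ) ^ 2 / (2 * b)
        - (r * sin θ) ^ 2 / (2 * c)) ≤ Real.exp (-(ε / 2) * r ^ 2) := by
      rw [exponent_polar ha hb hc r θ]
      apply Real.exp_le_exp.mpr
      have : ε * r ^ 2 ≤ q a b c θ * r ^ 2 := mul_le_mul_of_nonneg_right hlb (sq_nonneg r)
      nlinarith
    have habs : ‖Real.sign ((r * cos θ) * (r * sin θ)) *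
        (C0 * Real.exp (-((r * cos θ) ^ 2 / (2 * a)) - (r * cos θ - r * sin θ) ^ 2 / (2 * b)
          - (r * sin θ) ^ 2 / (2 * c)))‖
        ≤ C0 * Real.exp (-((r * cos θ) ^ 2 / (2 * a)) - (r * cos θ - r * sin θ) ^ 2 / (2 * b)
          - (r * sin θ) ^ 2 / (2 * c)) := norm_sign_mul_le _ _ (by positivity)
    calc ‖r * (Real.sign ((r * cos θ) * (r * sin θ)) *
          (C0 * Real.exp (-((r * cos θ) ^ 2 / (2 * a)) - (r * cos θ - r * sin θ) ^ 2 / (2 * b)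
            - (r * sin θ) ^ 2 / (2 * c))))‖
        = r * ‖Real.sign ((r * cos θ) * (r * sin θ)) *
          (C0 * Real.exp (-((r * cos θ) ^ 2 / (2 * a)) - (r * cos θ - r * sin θ) ^ 2 / (2 * b)
            - (r * sin θ) ^ 2 / (2 * c)))‖ := by
          rw [norm_mul, Real.norm_eq_abs r, abs_of_pos hr]
      _ ≤ r * (C0 * Real.exp (-(ε / 2) * r ^ 2)) := by
          apply mul_le_mul_of_nonneg_left _ hr.le
          exact le_trans habs (mul_le_mul_of_nonneg_left hexp hC0pos.le)
      _ = C0 * ((r * Real.exp (-(ε / 2) * r ^ 2)) * 1) := by ring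
  -- Step 3: Fubini on the polar target
  have step3 : (∫ p in Set.Ioi (0:ℝ) ×ˢ Set.Ioo (-π) π, p.1 * (Real.sign ((p.1 * cos p.2) * (p.1 * sin p.2)) *
      (C0 * Real.exp (-((p.1 * cos p.2) ^ 2 / (2 * a)) - (p.1 * cos p.2 - p.1 * sin p.2) ^ 2 / (2 * b)
        - (p.1 * sin p.2) ^ 2 / (2 * c)))))
      = ∫ θ in Set.Ioo (-π) π, ∫ r in Set.Ioi (0:ℝ), r * (Real.sign ((r * cos θ) * (r * sin θ)) *
        (C0 * Real.exp (-((r * cos θ) ^ 2 / (2 * a)) - (r * cos θ - r * sin θ) ^ 2 / (2 * b)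
          - (r * sin θ) ^ 2 / (2 * c)))) := by
    rw [Measure.volume_eq_prod ℝ ℝ, ← Measure.prod_restrict]
    exact MeasureTheory.integral_prod_symm _ hΨint
  -- Step 4: the radial integral
  have step4 : ∀ θ : ℝ, (∫ r in Set.Ioi (0:ℝ), r * (Real.sign ((r * cos θ) * (r * sin θ)) *
      (C0 * Real.exp (-((r * cos θ) ^ 2 / (2 * a)) - (r * cos θ - r * sin θ) ^ 2 / (2 * b)
        - (r * sin θ) ^ 2 / (2 * c)))))
      = C0 * (Real.sign (cos θ * sin θ) * (1 / q a b c θ)) := by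
    intro θ
    have hqθ := q_pos ha hb hc θ
    have h1 : ∀ r ∈ Set.Ioi (0:ℝ), r * (Real.sign ((r * cos θ) * (r * sin θ)) *
        (C0 * Real.exp (-((r * cos θ) ^ 2 / (2 * a)) - (r * cos θ - r * sin θ) ^ 2 / (2 * b)
          - (r * sin θ) ^ 2 / (2 * c))))
        = (C0 * Real.sign (cos θ * sin θ)) * (r * Real.exp (-(q a b c θ / 2) * r ^ 2)) := by
      intro r hr
      have hr0 : (0:ℝ) < r := hr
      have hsign : Real.sign ((r * cos θ) * (r * sin θ)) = Real.sign (cos θ * sin θ) := by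
        have e : (r * cos θ) * (r * sin θ) = (r * r) * (cos θ * sin θ) := by ring
        rw [e, sign_mul_pos_left (mul_pos hr0 hr0)]
      rw [hsign, exponent_polar ha hb hc r θ]
      ring
    rw [setIntegral_congr_fun measurableSet_Ioi h1, MeasureTheory.integral_const_mul]
    rw [integral_Ioi_mul_exp_neg_mul_sq (by positivity : (0:ℝ) < q a b c θ / 2)]
    rw [show 2 * (q a b c θ / 2) = q a b c θ by ring]
    ring
  -- Step 5: the angular integral
  have step5 : (∫ θ in Set.Ioo (-π) π, C0 * (Real.sign (cos θ * sin θ) * (1 / q a b c θ)))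
      = C0 * ∫ θ in (-π)..π, Real.sign (cos θ * sin θ) * (1 / q a b c θ) := by
    rw [MeasureTheory.integral_const_mul]
    congr 1
    rw [intervalIntegral.integral_of_le (by linarith : -π ≤ π), integral_Ioc_eq_integral_Ioo]
  -- assemble
  rw [step1, step2, step3]
  have step34 : (fun θ => ∫ r in Set.Ioi (0:ℝ), r * (Real.sign ((r * cos θ) * (r * sin θ)) *
      (C0 * Real.exp (-((r * cos θ) ^ 2 / (2 * a)) - (r * cos θ - r * sin θ) ^ 2 / (2 * b)
        - (r * sin θ) ^ 2 / (2 * c)))))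
      = fun θ => C0 * (Real.sign (cos θ * sin θ) * (1 / q a b c θ)) := funext step4
  rw [step34, step5, theta_integral ha hb hc]
  -- final computation
  have harg : 1 / (b * sD a b c) = Real.sqrt (a * c / (b * (a + b + c))) := by
    rw [show a * c / (b * (a + b + c)) = (1 / b) ^ 2 * ((a + b + c) / (a * b * c))⁻¹ by
      field_simp]
    rw [Real.sqrt_mul (sq_nonneg _), Real.sqrt_sq (by positivity : (0:ℝ) ≤ 1 / b),
      Real.sqrt_inv]
    show _ = 1 / b * (sD a b c)⁻¹
    field_simp
  rw [← harg, hC0]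
  show Real.sqrt ((a + b + c) / (a * b * c)) / (2 * π) * (4 * arctan (1 / (b * sD a b c)) / sD a b c) = _
  rw [show Real.sqrt ((a + b + c) / (a * b * c)) = sD a b c from rfl]
  field_simp
  ring

end

end GaussianSignAux



open Real in
/-- For `a, b, c > 0`, the expectation of `sgn(x·y)` under the bivariate Gaussian with
density `√((a+b+c)/(abc))·(2π)⁻¹·exp(−x²/(2a) − (x−y)²/(2b) − y²/(2c))` equals
`(2/π)·arctan √(ac/(b(a+b+c)))`: the two-point spin correlation `G(a,b,c)` of the
optimal matching with open boundary conditions at criticality, in the continuum limit. -/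
theorem gaussian_sign_correlation_obc
    (a b c : ℝ) (ha : 0 < a) (hb : 0 < b) (hc : 0 < c) :
    ∫ x : ℝ, ∫ y : ℝ,
        Real.sign (x * y) *
          (Real.sqrt ((a + b + c) / (a * b * c)) / (2 * π) *
            Real.exp (-(x ^ 2 / (2 * a)) - (x - y) ^ 2 / (2 * b) - y ^ 2 / (2 * c)))
      = (2 / π) * Real.arctan (Real.sqrt (a * c / (b * (a + b + c)))) :=
  GaussianSignAux.main ha hb hc
end

section
/- For every real b with 0 < b < 1, one has (1/(1−b)) · ∫₀^{1−b} (2/π) · arctan √(a·(1 − a − b)/b) da = (1 − √b)/(1 + √b). Hence the distance-averaged two-point correlation function of the one-dimensional Grid-Poisson matching with open boundary conditions at criticality, in the continuum limit, equals G_obc(b) = (1 − √b)/(1 + √b), where b is the rescaled distance between the two points. -/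
set_option maxHeartbeats 800000

open Real Set in
lemma key_integral (b : ℝ) (hb0 : 0 < b) (hb1 : b < 1) :
    ∫ a in (0:ℝ)..(1 - b), Real.arctan (Real.sqrt (a * (1 - a - b) / b))
      = π / 2 * (1 - Real.sqrt b) ^ 2 := by
  have hb' : (0:ℝ) < 1 - b := by linarith
  set u : ℝ := Real.sqrt b with hu_def
  have hu0 : 0 < u := Real.sqrt_pos.mpr hb0
  have hu2 : u ^ 2 = b := Real.sq_sqrt hb0.le
  set F : ℝ → ℝ := fun a =>
    a * Real.arctan (Real.sqrt (a * (1 - a - b) / b))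
      - 2 * u * Real.arcsin (Real.sqrt (a / (1 - b)))
      + b * Real.arcsin (Real.sqrt (a / ((1 - b) * (a + b))))
      + Real.arcsin (Real.sqrt (a * b / ((1 - b) * (1 - a)))) with hF_def
  have hderiv : ∀ x ∈ Ioo (0:ℝ) (1 - b),
      HasDerivAt F (Real.arctan (Real.sqrt (x * (1 - x - b) / b))) x := by
    intro x hx
    obtain ⟨hx0, hxL⟩ := hx
    have hL' : 0 < 1 - x - b := by linarith
    have h1x : 0 < 1 - x := by linarith
    have hxb : 0 < x + b := by linarith
    set s : ℝ := Real.sqrt (x * (1 - x - b)) with hs_def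
    have hs0 : 0 < s := Real.sqrt_pos.mpr (by positivity)
    have hs2 : s ^ 2 = x * (1 - x - b) := Real.sq_sqrt (by positivity)
    have hsq_pb : Real.sqrt (x * (1 - x - b) / b) = s / u := by
      rw [Real.sqrt_div (by positivity)]
    -- Term A
    have hp : HasDerivAt (fun a : ℝ => a * (1 - a - b) / b) ((1 - 2*x - b) / b) x := by
      have h := ((hasDerivAt_id x).mul (((hasDerivAt_id x).const_sub 1).sub_const b)).div_const b
      refine h.congr_deriv (Eq.symm ?_)
      simp only [id_eq]
      ring
    have hpa : HasDerivAt (fun a : ℝ => Real.arctan (Real.sqrt (a * (1 - a - b) / b)))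
        (1 / (1 + Real.sqrt (x * (1 - x - b) / b) ^ 2)
          * ((1 - 2*x - b) / b / (2 * Real.sqrt (x * (1 - x - b) / b)))) x :=
      (hp.sqrt (by positivity)).arctan
    have hA : HasDerivAt (fun a : ℝ => a * Real.arctan (Real.sqrt (a * (1 - a - b) / b)))
        (Real.arctan (s / u) + u * x * (1 - 2*x - b) / (2 * s * ((1 - x) * (x + b)))) x := by
      have h := (hasDerivAt_id x).mul hpa
      refine h.congr_deriv (Eq.symm ?_)
      rw [hsq_pb, one_mul]
      congr 1
      have h1p : 1 + (s / u) ^ 2 = (1 - x) * (x + b) / b := by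
        rw [div_pow, hs2, hu2]
        field_simp
        ring
      rw [h1p]
      simp only [id_eq]
      field_simp
    -- Term B
    have hargB1 : Real.sqrt (x / (1 - b)) ≠ -1 := by
      have := Real.sqrt_nonneg (x / (1 - b))
      intro h; rw [h] at this; linarith
    have hargB2 : Real.sqrt (x / (1 - b)) ≠ 1 := by
      have : Real.sqrt (x / (1 - b)) < 1 := by
        rw [Real.sqrt_lt' one_pos, one_pow, div_lt_one hb']; linarith
      exact ne_of_lt this
    have hw1 : HasDerivAt (fun a : ℝ => Real.sqrt (a / (1 - b)))
        (1 / (1 - b) / (2 * Real.sqrt (x / (1 - b)))) x := by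
      have h := ((hasDerivAt_id x).div_const (1 - b)).sqrt (by positivity)
      refine h.congr_deriv (Eq.symm ?_)
      rfl
    have hB : HasDerivAt (fun a : ℝ => 2 * u * Real.arcsin (Real.sqrt (a / (1 - b))))
        (u / s) x := by
      have h := ((Real.hasDerivAt_arcsin hargB1 hargB2).comp x hw1).const_mul (2 * u)
      refine h.congr_deriv (Eq.symm ?_)
      have e1 : 0 ≤ x / (1 - b) := by positivity
      have e2 : (0:ℝ) ≤ 1 - x / (1 - b) := by
        rw [sub_nonneg, div_le_one hb']; linarith
      have d1 : 1 - x / (1 - b) = (1 - x - b) / (1 - b) := by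
        field_simp
        ring
      apply (sq_eq_sq₀ (by positivity) (by positivity)).mp
      rw [Real.sq_sqrt e1, d1]
      simp only [mul_pow, div_pow, one_pow]
      rw [Real.sq_sqrt (by positivity : (0:ℝ) ≤ (1 - x - b) / (1 - b)),
        Real.sq_sqrt e1, hs2, hu2]
      field_simp
    -- Term C
    have hargC0 : (0:ℝ) ≤ x / ((1 - b) * (x + b)) := by positivity
    have hargC_lt : x / ((1 - b) * (x + b)) < 1 := by
      rw [div_lt_one (by positivity)]; nlinarith
    have hargC1 : Real.sqrt (x / ((1 - b) * (x + b))) ≠ -1 := by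
      have := Real.sqrt_nonneg (x / ((1 - b) * (x + b)))
      intro h; rw [h] at this; linarith
    have hargC2 : Real.sqrt (x / ((1 - b) * (x + b))) ≠ 1 := by
      have : Real.sqrt (x / ((1 - b) * (x + b))) < 1 := by
        rw [Real.sqrt_lt' one_pos, one_pow]; exact hargC_lt
      exact ne_of_lt this
    have hq2 : HasDerivAt (fun a : ℝ => a / ((1 - b) * (a + b)))
        (b / ((1 - b) * (x + b) ^ 2)) x := by
      have h := (hasDerivAt_id x).div (((hasDerivAt_id x).add_const b).const_mul (1 - b))
        (by positivity)
      refine h.congr_deriv (Eq.symm ?_)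
      simp only [id_eq]
      field_simp
      ring
    have hw2 : HasDerivAt (fun a : ℝ => Real.sqrt (a / ((1 - b) * (a + b))))
        (b / ((1 - b) * (x + b) ^ 2) / (2 * Real.sqrt (x / ((1 - b) * (x + b))))) x :=
      hq2.sqrt (by positivity)
    have hC : HasDerivAt (fun a : ℝ => b * Real.arcsin (Real.sqrt (a / ((1 - b) * (a + b)))))
        (u * b / (2 * s * (x + b))) x := by
      have h := ((Real.hasDerivAt_arcsin hargC1 hargC2).comp x hw2).const_mul b
      refine h.congr_deriv (Eq.symm ?_)
      have d2 : 1 - x / ((1 - b) * (x + b)) = b * (1 - x - b) / ((1 - b) * (x + b)) := by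
        field_simp
        ring
      apply (sq_eq_sq₀ (by positivity) (by positivity)).mp
      rw [Real.sq_sqrt hargC0, d2]
      simp only [mul_pow, div_pow, one_pow]
      rw [Real.sq_sqrt (by positivity : (0:ℝ) ≤ b * (1 - x - b) / ((1 - b) * (x + b))),
        Real.sq_sqrt hargC0, hs2, hu2]
      field_simp
    -- Term D
    have hargD0 : (0:ℝ) ≤ x * b / ((1 - b) * (1 - x)) := by positivity
    have hargD_lt : x * b / ((1 - b) * (1 - x)) < 1 := by
      rw [div_lt_one (by positivity)]; nlinarith
    have hargD1 : Real.sqrt (x * b / ((1 - b) * (1 - x))) ≠ -1 := by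
      have := Real.sqrt_nonneg (x * b / ((1 - b) * (1 - x)))
      intro h; rw [h] at this; linarith
    have hargD2 : Real.sqrt (x * b / ((1 - b) * (1 - x))) ≠ 1 := by
      have : Real.sqrt (x * b / ((1 - b) * (1 - x))) < 1 := by
        rw [Real.sqrt_lt' one_pos, one_pow]; exact hargD_lt
      exact ne_of_lt this
    have hq3 : HasDerivAt (fun a : ℝ => a * b / ((1 - b) * (1 - a)))
        (b / ((1 - b) * (1 - x) ^ 2)) x := by
      have h := ((hasDerivAt_id x).mul_const b).div
        (((hasDerivAt_id x).const_sub 1).const_mul (1 - b)) (by positivity)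
      refine h.congr_deriv (Eq.symm ?_)
      simp only [id_eq]
      field_simp
      ring
    have hw3 : HasDerivAt (fun a : ℝ => Real.sqrt (a * b / ((1 - b) * (1 - a))))
        (b / ((1 - b) * (1 - x) ^ 2) / (2 * Real.sqrt (x * b / ((1 - b) * (1 - x))))) x :=
      hq3.sqrt (by positivity)
    have hD : HasDerivAt (fun a : ℝ => Real.arcsin (Real.sqrt (a * b / ((1 - b) * (1 - a)))))
        (u / (2 * s * (1 - x))) x := by
      have h := (Real.hasDerivAt_arcsin hargD1 hargD2).comp x hw3
      refine h.congr_deriv (Eq.symm ?_)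
      have d3 : 1 - x * b / ((1 - b) * (1 - x)) = (1 - x - b) / ((1 - b) * (1 - x)) := by
        field_simp
        ring
      apply (sq_eq_sq₀ (by positivity) (by positivity)).mp
      rw [Real.sq_sqrt hargD0, d3]
      simp only [mul_pow, div_pow, one_pow]
      rw [Real.sq_sqrt (by positivity : (0:ℝ) ≤ (1 - x - b) / ((1 - b) * (1 - x))),
        Real.sq_sqrt hargD0, hs2, hu2]
      field_simp
    -- Combine
    have h := ((hA.sub hB).add hC).add hD
    refine h.congr_deriv (Eq.symm ?_)
    rw [hsq_pb]
    field_simp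
    ring
  have hcin : Continuous (fun a : ℝ => a * (1 - a - b) / b) :=
    (continuous_id.mul (by continuity)).div_const b
  have hc1 : Continuous (fun a : ℝ => a * Real.arctan (Real.sqrt (a * (1 - a - b) / b))) :=
    continuous_id.mul (Real.continuous_arctan.comp (Real.continuous_sqrt.comp hcin))
  have hc2 : Continuous (fun a : ℝ => 2 * u * Real.arcsin (Real.sqrt (a / (1 - b)))) :=
    continuous_const.mul (Real.continuous_arcsin.comp (Real.continuous_sqrt.comp
      (continuous_id.div_const (1 - b))))
  have hc3 : ContinuousOn (fun a : ℝ => b * Real.arcsin (Real.sqrt (a / ((1 - b) * (a + b)))))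
      (Icc (0:ℝ) (1 - b)) := by
    apply continuousOn_const.mul
    apply Real.continuous_arcsin.comp_continuousOn
    apply Real.continuous_sqrt.comp_continuousOn
    apply ContinuousOn.div continuousOn_id (by fun_prop)
    intro a ha
    have h0a : 0 ≤ a := ha.1
    positivity
  have hc4 : ContinuousOn (fun a : ℝ => Real.arcsin (Real.sqrt (a * b / ((1 - b) * (1 - a)))))
      (Icc (0:ℝ) (1 - b)) := by
    apply Real.continuous_arcsin.comp_continuousOn
    apply Real.continuous_sqrt.comp_continuousOn
    apply ContinuousOn.div (by fun_prop) (by fun_prop)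
    intro a ha
    have h1a : 0 < 1 - a := by have := ha.2; linarith
    positivity
  have hcont : ContinuousOn F (Icc (0:ℝ) (1 - b)) := by
    rw [hF_def]
    exact ((hc1.continuousOn.sub hc2.continuousOn).add hc3).add hc4
  have hint : IntervalIntegrable (fun a : ℝ => Real.arctan (Real.sqrt (a * (1 - a - b) / b)))
      MeasureTheory.volume 0 (1 - b) := by
    exact (Real.continuous_arctan.comp (Real.continuous_sqrt.comp hcin)).intervalIntegrable _ _
  rw [intervalIntegral.integral_eq_sub_of_hasDerivAt_of_le hb'.le hcont hderiv hint]
  have h0 : F 0 = 0 := by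
    rw [hF_def]
    norm_num
  have hLb : F (1 - b) = π / 2 * (1 - u) ^ 2 := by
    rw [hF_def]
    simp only []
    have e1 : (1 - b) * (1 - (1 - b) - b) / b = 0 := by ring
    have e2 : (1 - b) / (1 - b) = 1 := div_self hb'.ne'
    have e3 : (1 - b) / ((1 - b) * ((1 - b) + b)) = 1 := by
      field_simp
      ring
    have e4 : (1 - b) * b / ((1 - b) * (1 - (1 - b))) = 1 := by
      field_simp
      rw [sub_sub_cancel]; exact div_self hb0.ne'
    rw [e1, e2, e3, e4, Real.sqrt_zero, Real.arctan_zero, Real.sqrt_one, Real.arcsin_one]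
    rw [← hu2]
    ring
  rw [h0, hLb]
  ring



open Real in
/-- The distance-averaged two-point correlation function of the one-dimensional
Grid-Poisson matching with open boundary conditions at criticality, in the continuum
limit: for `0 < b < 1`,
`(1/(1−b)) ∫₀^{1−b} (2/π) arctan √(a(1−a−b)/b) da = (1 − √b)/(1 + √b)`. -/
theorem averaged_correlation_obc (b : ℝ) (hb0 : 0 < b) (hb1 : b < 1) :
    (1 / (1 - b)) * ∫ a in (0 : ℝ)..(1 - b),
        (2 / π) * Real.arctan (Real.sqrt (a * (1 - a - b) / b))
      = (1 - Real.sqrt b) / (1 + Real.sqrt b) := by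
  rw [intervalIntegral.integral_const_mul, key_integral b hb0 hb1]
  have hu2 : Real.sqrt b ^ 2 = b := Real.sq_sqrt hb0.le
  have hu0 : 0 < Real.sqrt b := Real.sqrt_pos.mpr hb0
  have hu1 : Real.sqrt b < 1 := by
    rw [Real.sqrt_lt' one_pos, one_pow]; exact hb1
  have h1b : 1 - b = (1 - Real.sqrt b) * (1 + Real.sqrt b) := by
    linear_combination hu2
  rw [h1b]
  have h1 : (1:ℝ) - Real.sqrt b ≠ 0 := by linarith
  have h2 : (1:ℝ) + Real.sqrt b ≠ 0 := by linarith
  have hx : 2 / π * (π / 2 * (1 - Real.sqrt b) ^ 2) = (1 - Real.sqrt b) ^ 2 := by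
    field_simp
  rw [hx]
  field_simp
end

section
/- Let 0 < η < 1/3 and let q(x, y) be the centered bivariate Gaussian probability density with covariance matrix C given by C₁₁ = C₂₂ = 1/12 and C₁₂ = C₂₁ = 1/12 − η/2 (so det C = η(1 − 3η)/12 > 0). Then ∫_ℝ ∫_ℝ sgn(x·y) · q(x, y) dx dy = (2/π) · arctan( (1 − 6η) / √(12·η·(1 − 3η)) ). Consequently, the two-point spin correlation of the critical one-dimensional Grid-Poisson matching with periodic boundary conditions at p = 2, in the continuum limit, at rescaled separation τ ∈ (0,1), equals G_pbc(τ) = (2/π)·arctan((1 − 6τ(1−τ))/√(12·τ(1−τ)·(1 − 3τ(1−τ)))), which vanishes exactly at τ = (3 − √3)/6 and τ = 1 − (3 − √3)/6. -/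
open Real MeasureTheory Set Filter Topology

namespace GaussSign


lemma sign_mul' (x y : ℝ) : Real.sign (x * y) = Real.sign x * Real.sign y := by
  rcases lt_trichotomy x 0 with hx | rfl | hx
  · rcases lt_trichotomy y 0 with hy | rfl | hy
    · rw [Real.sign_of_pos (mul_pos_of_neg_of_neg hx hy), Real.sign_of_neg hx,
        Real.sign_of_neg hy]; ring
    · simp
    · rw [Real.sign_of_neg (mul_neg_of_neg_of_pos hx hy), Real.sign_of_neg hx,
        Real.sign_of_pos hy]; ring
  · simp
  · rcases lt_trichotomy y 0 with hy | rfl | hy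
    · rw [Real.sign_of_neg (mul_neg_of_pos_of_neg hx hy), Real.sign_of_pos hx,
        Real.sign_of_neg hy]; ring
    · simp
    · rw [Real.sign_of_pos (mul_pos hx hy), Real.sign_of_pos hx, Real.sign_of_pos hy]; ring

lemma measurable_sign' : Measurable Real.sign := by
  have : Real.sign = fun r : ℝ => if r < 0 then (-1 : ℝ) else if 0 < r then 1 else 0 := rfl
  rw [this]
  exact Measurable.ite measurableSet_Iio measurable_const
    (Measurable.ite measurableSet_Ioi measurable_const measurable_const)

lemma abs_sign_le (x : ℝ) : |Real.sign x| ≤ 1 := by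
  rcases Real.sign_apply_eq x with h | h | h <;> rw [h] <;> norm_num

lemma integral_Ioi_comp_sub (f : ℝ → ℝ) (μ c : ℝ) :
    ∫ x in Ioi c, f (x - μ) = ∫ x in Ioi (c - μ), f x := by
  have A : MeasurableEmbedding (fun x : ℝ => x + -μ) :=
    (Homeomorph.addRight (-μ)).isClosedEmbedding.measurableEmbedding
  have h := MeasurableEmbedding.setIntegral_map (μ := volume) A f (Ioi (c - μ))
  rw [map_add_right_eq_self volume (-μ)] at h
  have hpre : (fun x : ℝ => x + -μ) ⁻¹' Ioi (c - μ) = Ioi c := by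
    ext x
    simp only [mem_preimage, mem_Ioi]
    constructor <;> intro <;> linarith
  rw [hpre] at h
  simp_rw [← sub_eq_add_neg] at h
  exact h.symm

lemma integral_Iio_comp_sub (f : ℝ → ℝ) (μ c : ℝ) :
    ∫ x in Iio c, f (x - μ) = ∫ x in Iio (c - μ), f x := by
  have A : MeasurableEmbedding (fun x : ℝ => x + -μ) :=
    (Homeomorph.addRight (-μ)).isClosedEmbedding.measurableEmbedding
  have h := MeasurableEmbedding.setIntegral_map (μ := volume) A f (Iio (c - μ))
  rw [map_add_right_eq_self volume (-μ)] at h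
  have hpre : (fun x : ℝ => x + -μ) ⁻¹' Iio (c - μ) = Iio c := by
    ext x
    simp only [mem_preimage, mem_Iio]
    constructor <;> intro <;> linarith
  rw [hpre] at h
  simp_rw [← sub_eq_add_neg] at h
  exact h.symm



noncomputable def H (c u : ℝ) : ℝ := ∫ t in (0:ℝ)..u, Real.exp (-c * t ^ 2)

lemma contf0 (c : ℝ) : Continuous fun t : ℝ => Real.exp (-c * t ^ 2) := by fun_prop

lemma H_hasDeriv (c u : ℝ) : HasDerivAt (H c) (Real.exp (-c * u ^ 2)) u :=
  (intervalIntegral.integral_hasStrictDerivAt_right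
    ((contf0 c).intervalIntegrable _ _) ((contf0 c).stronglyMeasurableAtFilter _ _)
    (contf0 c).continuousAt).hasDerivAt

lemma interval_eq (c u : ℝ) :
    ∫ t in (-u)..u, Real.exp (-c * t ^ 2) = H c u - H c (-u) :=
  (intervalIntegral.integral_interval_sub_left
    ((contf0 c).intervalIntegrable _ _) ((contf0 c).intervalIntegrable _ _)).symm

lemma H_diff_bound (c u : ℝ) (hc : 0 ≤ c) : |H c u - H c (-u)| ≤ 2 * |u| := by
  rw [← interval_eq]
  have h := intervalIntegral.norm_integral_le_of_norm_le_const (C := 1)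
    (f := fun t : ℝ => Real.exp (-c * t ^ 2)) (a := -u) (b := u) ?_
  · rw [Real.norm_eq_abs] at h
    calc |∫ t in (-u)..u, Real.exp (-c * t ^ 2)| ≤ 1 * |u - (-u)| := h
      _ = 2 * |u| := by rw [one_mul, sub_neg_eq_add, ← two_mul, abs_mul]; norm_num
  · intro t _
    rw [Real.norm_eq_abs, abs_of_pos (Real.exp_pos _)]
    exact Real.exp_le_one_iff.mpr (by nlinarith [sq_nonneg t])

lemma signed_gaussian_integral {c : ℝ} (hc : 0 < c) (μ : ℝ) :
    ∫ y : ℝ, Real.sign y * Real.exp (-c * (y - μ) ^ 2) = H c μ - H c (-μ) := by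
  set f : ℝ → ℝ := fun t => Real.exp (-c * t ^ 2) with hf
  have fInt : Integrable f := integrable_exp_neg_mul_sq hc
  have fShift : Integrable fun y : ℝ => f (y - μ) := fInt.comp_sub_right μ
  have gInt : Integrable fun y : ℝ => Real.sign y * f (y - μ) := by
    refine Integrable.bdd_mul (c := 1) fShift ?_ (Eventually.of_forall fun y => ?_)
    · exact (measurable_sign').aestronglyMeasurable
    · rw [Real.norm_eq_abs]; exact abs_sign_le y
  have hsplit := intervalIntegral.integral_Iic_add_Ioi (b := (0:ℝ)) gInt.integrableOn gInt.integrableOn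
  have hIoi : ∫ y in Ioi (0:ℝ), Real.sign y * f (y - μ) = ∫ y in Ioi (-μ), f y := by
    rw [setIntegral_congr_fun measurableSet_Ioi
      (fun y (hy : y ∈ Ioi (0:ℝ)) => by rw [Real.sign_of_pos hy, one_mul])]
    have := integral_Ioi_comp_sub f μ 0
    rwa [zero_sub] at this
  have hIic : ∫ y in Iic (0:ℝ), Real.sign y * f (y - μ) = -∫ y in Iio (-μ), f y := by
    have e1 : ∫ y in Iio (0:ℝ), Real.sign y * f (y - μ) = ∫ y in Iio (0:ℝ), -f (y - μ) :=
      setIntegral_congr_fun measurableSet_Iio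
        (fun y (hy : y ∈ Iio (0:ℝ)) => by rw [Real.sign_of_neg hy]; ring)
    rw [integral_Iic_eq_integral_Iio, e1, integral_neg]
    have := integral_Iio_comp_sub f μ 0
    rw [zero_sub] at this
    rw [this]
  have h1 := intervalIntegral.integral_Iic_add_Ioi (b := -μ) fInt.integrableOn fInt.integrableOn
  have heven : ∫ y in Iic μ, f y = ∫ y in Ioi (-μ), f y := by
    rw [← integral_comp_neg_Iic μ f]
    refine setIntegral_congr_fun measurableSet_Iic fun y _ => ?_
    simp [hf, neg_sq]
  have hIioIic : ∫ y in Iio (-μ), f y = ∫ y in Iic (-μ), f y :=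
    (integral_Iic_eq_integral_Iio (μ := volume)).symm
  have hRHS : H c μ - H c (-μ) = (∫ y in Iic μ, f y) - ∫ y in Iic (-μ), f y := by
    rw [← interval_eq, ← intervalIntegral.integral_Iic_sub_Iic fInt.integrableOn fInt.integrableOn]
  show (∫ y : ℝ, Real.sign y * f (y - μ)) = H c μ - H c (-μ)
  linarith [hsplit, hIoi, hIic, h1, heven, hIioIic, hRHS]




lemma contH (c : ℝ) : Continuous (H c) := by
  have h : Differentiable ℝ (H c) := fun u => (H_hasDeriv c u).differentiableAt
  exact h.continuous

lemma contφ (c b : ℝ) :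
    Continuous fun x : ℝ => Real.exp (-6 * x ^ 2) * (H c (b * x) - H c (-(b * x))) := by
  refine (Real.continuous_exp.comp (by fun_prop)).mul (Continuous.sub ?_ ?_)
  · exact (contH c).comp (continuous_const.mul continuous_id)
  · exact (contH c).comp (continuous_const.mul continuous_id).neg

lemma integral_Ioi_x_exp {k : ℝ} (hk : 0 < k) :
    ∫ x in Ioi (0:ℝ), x * Real.exp (-k * x ^ 2) = 1 / (2 * k) := by
  have A : ∀ x : ℝ, HasDerivAt (fun y : ℝ => -(2 * k)⁻¹ * Real.exp (-k * y ^ 2))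
      (x * Real.exp (-k * x ^ 2)) x := by
    intro x
    refine (((hasDerivAt_pow 2 x).const_mul (-k)).exp.const_mul (-(2 * k)⁻¹)).congr_deriv ?_
    have : k ≠ 0 := hk.ne'
    field_simp
    ring
  have B : Tendsto (fun y : ℝ => -(2 * k)⁻¹ * Real.exp (-k * y ^ 2)) atTop
      (𝓝 (-(2 * k)⁻¹ * 0)) := by
    apply Tendsto.const_mul
    apply Real.tendsto_exp_atBot.comp
    exact (tendsto_pow_atTop two_ne_zero).const_mul_atTop_of_neg (neg_lt_zero.2 hk)
  have h := integral_Ioi_of_hasDerivAt_of_tendsto' (a := 0) (fun x _ => A x)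
    ((integrable_mul_exp_neg_mul_sq hk).integrableOn) B
  rw [h]
  norm_num

noncomputable def F (c b : ℝ) : ℝ :=
  ∫ x in Ioi (0:ℝ), Real.exp (-6 * x ^ 2) * (H c (b * x) - H c (-(b * x)))

lemma F_hasDeriv {c : ℝ} (hc : 0 < c) (b : ℝ) :
    HasDerivAt (F c) (1 / (6 + c * b ^ 2)) b := by
  have h6 : (0:ℝ) < 6 := by norm_num
  have habs_int : Integrable (fun x : ℝ => |x| * Real.exp (-6 * x ^ 2)) := by
    have := (integrable_mul_exp_neg_mul_sq h6).abs
    refine this.congr (Eventually.of_forall fun x => ?_)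
    simp [abs_mul, abs_of_pos (Real.exp_pos _)]
  set φ' : ℝ → ℝ → ℝ := fun b x =>
    Real.exp (-6 * x ^ 2) * (2 * x * Real.exp (-c * (b * x) ^ 2)) with hφ'
  have hderiv : ∀ (b' : ℝ) (x : ℝ), HasDerivAt
      (fun t => Real.exp (-6 * x ^ 2) * (H c (t * x) - H c (-(t * x)))) (φ' b' x) b' := by
    intro b' x
    have d1 : HasDerivAt (fun t : ℝ => H c (t * x)) (Real.exp (-c * (b' * x) ^ 2) * x) b' := by
      have := (H_hasDeriv c (b' * x)).comp b' ((hasDerivAt_id b').mul_const x)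
      simpa [Function.comp_def] using this
    have d2 : HasDerivAt (fun t : ℝ => H c (-(t * x)))
        (Real.exp (-c * (b' * x) ^ 2) * (-x)) b' := by
      have := (H_hasDeriv c (-(b' * x))).comp b' (((hasDerivAt_id b').mul_const x).neg)
      simpa [neg_sq, Function.comp_def] using this
    have := (d1.sub d2).const_mul (Real.exp (-6 * x ^ 2))
    refine this.congr_deriv ?_
    rw [hφ']
    ring
  have key := hasDerivAt_integral_of_dominated_loc_of_deriv_le
    (μ := volume.restrict (Ioi (0:ℝ)))
    (F := fun b x => Real.exp (-6 * x ^ 2) * (H c (b * x) - H c (-(b * x))))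
    (F' := φ') (x₀ := b) (s := Metric.ball b 1) (bound := fun x => 2 * (|x| * Real.exp (-6 * x ^ 2)))
    (Metric.ball_mem_nhds b one_pos)
    (Eventually.of_forall fun b' => (contφ c b').aestronglyMeasurable)
    ?_ ?_ ?_ ?_ ?_
  · have hval : (∫ x in Ioi (0:ℝ), φ' b x) = 1 / (6 + c * b ^ 2) := by
      have hpos : 0 < 6 + c * b ^ 2 := by positivity
      have heq : ∀ x : ℝ, φ' b x = 2 * (x * Real.exp (-(6 + c * b ^ 2) * x ^ 2)) := by
        intro x
        have he : Real.exp (-6 * x ^ 2) * Real.exp (-c * (b * x) ^ 2)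
            = Real.exp (-(6 + c * b ^ 2) * x ^ 2) := by
          rw [← Real.exp_add]; congr 1; ring
        show Real.exp (-6 * x ^ 2) * (2 * x * Real.exp (-c * (b * x) ^ 2))
            = 2 * (x * Real.exp (-(6 + c * b ^ 2) * x ^ 2))
        rw [← he]; ring
      rw [show (fun x => φ' b x) = fun x => 2 * (x * Real.exp (-(6 + c * b ^ 2) * x ^ 2)) from
        funext heq]
      rw [MeasureTheory.integral_const_mul, integral_Ioi_x_exp hpos]
      field_simp
    rw [← hval]
    exact key.2
  · -- integrability at b
    refine Integrable.mono' ((habs_int.const_mul (2 * |b|)).restrict) ?_ ?_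
    · exact (contφ c b).aestronglyMeasurable
    · refine Eventually.of_forall fun x => ?_
      rw [Real.norm_eq_abs, abs_mul, abs_of_pos (Real.exp_pos _)]
      calc Real.exp (-6 * x ^ 2) * |H c (b * x) - H c (-(b * x))|
          ≤ Real.exp (-6 * x ^ 2) * (2 * |b * x|) :=
            mul_le_mul_of_nonneg_left (H_diff_bound c (b * x) hc.le) (Real.exp_pos _).le
        _ = 2 * |b| * (|x| * Real.exp (-6 * x ^ 2)) := by rw [abs_mul]; ring
  · exact Continuous.aestronglyMeasurable (by fun_prop)
  · refine Eventually.of_forall fun x => fun b' _ => ?_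
    rw [Real.norm_eq_abs, hφ']
    have h1 : Real.exp (-c * (b' * x) ^ 2) ≤ 1 :=
      Real.exp_le_one_iff.mpr (by nlinarith [sq_nonneg (b' * x)])
    rw [abs_mul, abs_of_pos (Real.exp_pos _), abs_mul, abs_mul,
      abs_of_pos (Real.exp_pos _)]
    calc Real.exp (-6 * x ^ 2) * (|2| * |x| * Real.exp (-c * (b' * x) ^ 2))
        ≤ Real.exp (-6 * x ^ 2) * (|2| * |x| * 1) := by
          apply mul_le_mul_of_nonneg_left _ (Real.exp_pos _).le
          apply mul_le_mul_of_nonneg_left h1 (by positivity)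
      _ = 2 * (|x| * Real.exp (-6 * x ^ 2)) := by rw [abs_of_pos (by norm_num : (0:ℝ) < 2)]; ring
  · exact (habs_int.const_mul 2).restrict
  · exact Eventually.of_forall fun x => fun b' _ => hderiv b' x



lemma F_eq {c : ℝ} (hc : 0 < c) (b : ℝ) :
    F c b = (Real.sqrt (6 * c))⁻¹ * Real.arctan (Real.sqrt (c / 6) * b) := by
  set k : ℝ := Real.sqrt (c / 6) with hk
  have hkpos : 0 < k := Real.sqrt_pos.mpr (by positivity)
  have hk2 : k ^ 2 = c / 6 := Real.sq_sqrt (by positivity)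
  have hsq : Real.sqrt (6 * c) = 6 * k := by
    rw [show (6:ℝ) * c = 6 ^ 2 * (c / 6) by ring, Real.sqrt_mul (by positivity), hk,
      Real.sqrt_sq (by norm_num : (0:ℝ) ≤ 6)]
  set G : ℝ → ℝ := fun b => (Real.sqrt (6 * c))⁻¹ * Real.arctan (k * b) with hG
  have hGd : ∀ b : ℝ, HasDerivAt G (1 / (6 + c * b ^ 2)) b := by
    intro b
    have hlin : HasDerivAt (fun y : ℝ => k * y) k b := by
      simpa using (hasDerivAt_id b).const_mul k
    have h1 : HasDerivAt (fun b : ℝ => Real.arctan (k * b))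
        (1 / (1 + (k * b) ^ 2) * k) b :=
      (Real.hasDerivAt_arctan (k * b)).comp b hlin
    have h2 := h1.const_mul (Real.sqrt (6 * c))⁻¹
    refine h2.congr_deriv ?_
    rw [hsq]
    have h6k : (0:ℝ) < 1 + (k * b) ^ 2 := by positivity
    field_simp
    nlinarith [hk2, hkpos]
  have hdiff : Differentiable ℝ (fun b => F c b - G b) :=
    fun b => ((F_hasDeriv hc b).sub (hGd b)).differentiableAt
  have hzero : ∀ b : ℝ, deriv (fun b => F c b - G b) b = 0 := by
    intro b
    rw [show (fun b => F c b - G b) = F c - G from rfl, ((F_hasDeriv hc b).sub (hGd b)).deriv]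
    ring
  have hconst := is_const_of_deriv_eq_zero hdiff hzero b 0
  have hF0 : F c 0 = 0 := by
    rw [F]
    simp
  have hG0 : G 0 = 0 := by rw [hG]; simp
  simp only [hF0, hG0, sub_zero] at hconst
  rw [hG] at hconst
  linarith [hconst]



theorem part1 (η : ℝ) (hη0 : 0 < η) (hη1 : η < 1 / 3) :
    (∫ x : ℝ, ∫ y : ℝ,
        Real.sign (x * y) *
          (Real.exp (-((x ^ 2 - 2 * (1 - 6 * η) * x * y + y ^ 2) / (2 * η * (1 - 3 * η)))) /
            (2 * π * Real.sqrt (η * (1 - 3 * η) / 12)))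
      = (2 / π) * Real.arctan ((1 - 6 * η) / Real.sqrt (12 * η * (1 - 3 * η)))) := by
  have hApos : 0 < η * (1 - 3 * η) := mul_pos hη0 (by linarith)
  obtain ⟨c, hc⟩ : ∃ c : ℝ, c = (2 * (η * (1 - 3 * η)))⁻¹ := ⟨_, rfl⟩
  have hcpos : 0 < c := by rw [hc]; positivity
  obtain ⟨ρ, hρ⟩ : ∃ ρ : ℝ, ρ = 1 - 6 * η := ⟨_, rfl⟩
  obtain ⟨N, hN⟩ : ∃ N : ℝ, N = 2 * π * Real.sqrt (η * (1 - 3 * η) / 12) := ⟨_, rfl⟩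
  have hNpos : 0 < N := by
    rw [hN]; have := Real.pi_pos
    have : 0 < Real.sqrt (η * (1 - 3 * η) / 12) := Real.sqrt_pos.mpr (by positivity)
    positivity
  -- inner integral
  have hinner : ∀ x : ℝ,
      (∫ y : ℝ, Real.sign (x * y) *
        (Real.exp (-((x ^ 2 - 2 * (1 - 6 * η) * x * y + y ^ 2) / (2 * η * (1 - 3 * η)))) /
          (2 * π * Real.sqrt (η * (1 - 3 * η) / 12))))
      = N⁻¹ * (Real.sign x * (Real.exp (-6 * x ^ 2) * (H c (ρ * x) - H c (-(ρ * x))))) := by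
    intro x
    have hpt : ∀ y : ℝ, Real.sign (x * y) *
        (Real.exp (-((x ^ 2 - 2 * (1 - 6 * η) * x * y + y ^ 2) / (2 * η * (1 - 3 * η)))) /
          (2 * π * Real.sqrt (η * (1 - 3 * η) / 12)))
        = (N⁻¹ * (Real.sign x * Real.exp (-6 * x ^ 2))) *
          (Real.sign y * Real.exp (-c * (y - ρ * x) ^ 2)) := by
      intro y
      have hexp : Real.exp (-((x ^ 2 - 2 * (1 - 6 * η) * x * y + y ^ 2) / (2 * η * (1 - 3 * η))))
          = Real.exp (-6 * x ^ 2) * Real.exp (-c * (y - ρ * x) ^ 2) := by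
        rw [← Real.exp_add]
        congr 1
        rw [hc, hρ]
        have h2 : (0:ℝ) < 1 - 3 * η := by linarith
        field_simp [hη0.ne', h2.ne', (by linarith : (0:ℝ) < 1 - η * 3).ne']
        ring
      rw [sign_mul', hexp, hN]
      field_simp
    rw [show (fun y : ℝ => Real.sign (x * y) *
        (Real.exp (-((x ^ 2 - 2 * (1 - 6 * η) * x * y + y ^ 2) / (2 * η * (1 - 3 * η)))) /
          (2 * π * Real.sqrt (η * (1 - 3 * η) / 12))))
        = fun y : ℝ => (N⁻¹ * (Real.sign x * Real.exp (-6 * x ^ 2))) *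
          (Real.sign y * Real.exp (-c * (y - ρ * x) ^ 2)) from funext hpt]
    rw [MeasureTheory.integral_const_mul, signed_gaussian_integral hcpos (ρ * x)]
    ring
  -- rewrite outer integrand
  rw [show (fun x : ℝ => ∫ y : ℝ, Real.sign (x * y) *
      (Real.exp (-((x ^ 2 - 2 * (1 - 6 * η) * x * y + y ^ 2) / (2 * η * (1 - 3 * η)))) /
        (2 * π * Real.sqrt (η * (1 - 3 * η) / 12))))
      = fun x : ℝ => N⁻¹ * (Real.sign x *
        (Real.exp (-6 * x ^ 2) * (H c (ρ * x) - H c (-(ρ * x))))) from funext hinner]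
  rw [MeasureTheory.integral_const_mul]
  -- evenness
  have hgabs : ∀ x : ℝ, Real.sign x * (Real.exp (-6 * x ^ 2) * (H c (ρ * x) - H c (-(ρ * x))))
      = Real.exp (-6 * |x| ^ 2) * (H c (ρ * |x|) - H c (-(ρ * |x|))) := by
    intro x
    rcases lt_trichotomy x 0 with hx | rfl | hx
    · rw [Real.sign_of_neg hx, abs_of_neg hx]
      rw [show ρ * -x = -(ρ * x) by ring, neg_neg, neg_sq]
      ring
    · simp
    · rw [Real.sign_of_pos hx, abs_of_pos hx, one_mul]
  rw [show (fun x : ℝ => Real.sign x *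
      (Real.exp (-6 * x ^ 2) * (H c (ρ * x) - H c (-(ρ * x)))))
      = fun x : ℝ => Real.exp (-6 * |x| ^ 2) * (H c (ρ * |x|) - H c (-(ρ * |x|)))
      from funext hgabs]
  rw [integral_comp_abs
    (f := fun x : ℝ => Real.exp (-6 * x ^ 2) * (H c (ρ * x) - H c (-(ρ * x))))]
  have hFρ : (∫ x in Ioi (0:ℝ), Real.exp (-6 * x ^ 2) * (H c (ρ * x) - H c (-(ρ * x))))
      = F c ρ := rfl
  rw [hFρ, F_eq hcpos ρ]
  -- constants
  have harg : Real.sqrt (c / 6) * ρ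
      = (1 - 6 * η) / Real.sqrt (12 * η * (1 - 3 * η)) := by
    have h2 : (0:ℝ) < 1 - 3 * η := by linarith
    have hc6 : c / 6 = (12 * η * (1 - 3 * η))⁻¹ := by
      refine eq_inv_of_mul_eq_one_left ?_
      rw [hc]
      field_simp [hη0.ne', h2.ne', (by linarith : (0:ℝ) < 1 - η * 3).ne']
      ring
    rw [hc6, Real.sqrt_inv, hρ, div_eq_mul_inv, mul_comm]
  rw [harg]
  have h6c : 0 < 6 * c := by positivity
  have hst : Real.sqrt (η * (1 - 3 * η) / 12) * Real.sqrt (6 * c) = 1 / 2 := by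
    rw [← Real.sqrt_mul (by positivity)]
    rw [show η * (1 - 3 * η) / 12 * (6 * c) = 1 / 4 from by
      rw [hc]
      have h2 : (0:ℝ) < 1 - 3 * η := by linarith
      field_simp [hη0.ne', h2.ne', (by linarith : (0:ℝ) < 1 - η * 3).ne']
      ring]
    rw [show (1:ℝ) / 4 = (1 / 2) ^ 2 by norm_num, Real.sqrt_sq (by norm_num)]
  have hs : 0 < Real.sqrt (η * (1 - 3 * η) / 12) := Real.sqrt_pos.mpr (by positivity)
  have ht : 0 < Real.sqrt (6 * c) := Real.sqrt_pos.mpr h6c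
  have hπ := Real.pi_pos
  have hNt : (2 * π * Real.sqrt (η * (1 - 3 * η) / 12)) * Real.sqrt (6 * c) = π := by
    rw [mul_assoc (2 * π), hst]
    ring
  have hcoef : (2 * π * Real.sqrt (η * (1 - 3 * η) / 12))⁻¹ * 2 * (Real.sqrt (6 * c))⁻¹
      = 2 / π :=
    calc (2 * π * Real.sqrt (η * (1 - 3 * η) / 12))⁻¹ * 2 * (Real.sqrt (6 * c))⁻¹
        = 2 * ((2 * π * Real.sqrt (η * (1 - 3 * η) / 12)) * Real.sqrt (6 * c))⁻¹ := by
          rw [mul_inv]; ring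
      _ = 2 * π⁻¹ := by rw [hNt]
      _ = 2 / π := by rw [div_eq_mul_inv]
  rw [hN]
  rw [show (2 * π * Real.sqrt (η * (1 - 3 * η) / 12))⁻¹ *
      (2 * ((Real.sqrt (6 * c))⁻¹ * Real.arctan ((1 - 6 * η) / Real.sqrt (12 * η * (1 - 3 * η)))))
      = ((2 * π * Real.sqrt (η * (1 - 3 * η) / 12))⁻¹ * 2 * (Real.sqrt (6 * c))⁻¹) *
        Real.arctan ((1 - 6 * η) / Real.sqrt (12 * η * (1 - 3 * η))) from by ring, hcoef]



theorem part2 (τ : ℝ) (hτ : τ ∈ Set.Ioo (0 : ℝ) 1) :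
    ((2 / π) * Real.arctan
        ((1 - 6 * τ * (1 - τ)) /
          Real.sqrt (12 * τ * (1 - τ) * (1 - 3 * τ * (1 - τ)))) = 0 ↔
      τ = (3 - Real.sqrt 3) / 6 ∨ τ = 1 - (3 - Real.sqrt 3) / 6) := by
  obtain ⟨hτ0, hτ1⟩ := hτ
  have h3 : Real.sqrt 3 ^ 2 = 3 := Real.sq_sqrt (by norm_num)
  have hη'pos : 0 < τ * (1 - τ) := mul_pos hτ0 (by linarith)
  have hquarter : τ * (1 - τ) ≤ 1 / 4 := by nlinarith [sq_nonneg (τ - 1 / 2)]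
  have hD : 0 < Real.sqrt (12 * τ * (1 - τ) * (1 - 3 * τ * (1 - τ))) :=
    Real.sqrt_pos.mpr (by nlinarith)
  constructor
  · intro h
    have h2π : (2 : ℝ) / π ≠ 0 := div_ne_zero two_ne_zero Real.pi_ne_zero
    have harct : Real.arctan
        ((1 - 6 * τ * (1 - τ)) /
          Real.sqrt (12 * τ * (1 - τ) * (1 - 3 * τ * (1 - τ)))) = 0 := by
      rcases mul_eq_zero.mp h with h' | h'
      · exact absurd h' h2π
      · exact h'
    have hnum : 1 - 6 * τ * (1 - τ) = 0 := by
      have hdiv := Real.arctan_eq_zero_iff.mp harct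
      rcases div_eq_zero_iff.mp hdiv with h' | h'
      · exact h'
      · exact absurd h' hD.ne'
    have hroots : (τ - (3 - Real.sqrt 3) / 6) * (τ - (1 - (3 - Real.sqrt 3) / 6)) = 0 := by
      linear_combination (1 / 6) * hnum + (-1 / 36) * h3
    rcases mul_eq_zero.mp hroots with h' | h'
    · exact Or.inl (sub_eq_zero.mp h')
    · exact Or.inr (sub_eq_zero.mp h')
  · rintro (rfl | rfl)
    · have hnum : 1 - 6 * ((3 - Real.sqrt 3) / 6) * (1 - (3 - Real.sqrt 3) / 6) = 0 := by
        linear_combination (1 / 6) * h3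
      rw [hnum, zero_div, Real.arctan_zero, mul_zero]
    · have hnum : 1 - 6 * (1 - (3 - Real.sqrt 3) / 6) * (1 - (1 - (3 - Real.sqrt 3) / 6)) = 0 := by
        linear_combination (1 / 6) * h3
      rw [hnum, zero_div, Real.arctan_zero, mul_zero]


end GaussSign

open Real in
/-- For `0 < η < 1/3`, the expectation of `sgn(x·y)` under the centered bivariate
Gaussian with covariance `C₁₁ = C₂₂ = 1/12`, `C₁₂ = 1/12 − η/2` (so
`det C = η(1−3η)/12` and inverse covariance `(1/(η(1−3η)))·[[1, 6η−1],[6η−1, 1]]`)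
equals `(2/π)·arctan((1−6η)/√(12η(1−3η)))`. Consequently the two-point spin
correlation `G_pbc(τ)` of the critical periodic problem at `p = 2`, with
`η = τ(1−τ)`, vanishes exactly at `τ = (3−√3)/6` and `τ = 1 − (3−√3)/6`. -/
theorem gaussian_sign_correlation_pbc (η : ℝ) (hη0 : 0 < η) (hη1 : η < 1 / 3) :
    (∫ x : ℝ, ∫ y : ℝ,
        Real.sign (x * y) *
          (Real.exp (-((x ^ 2 - 2 * (1 - 6 * η) * x * y + y ^ 2) / (2 * η * (1 - 3 * η)))) /
            (2 * π * Real.sqrt (η * (1 - 3 * η) / 12)))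
      = (2 / π) * Real.arctan ((1 - 6 * η) / Real.sqrt (12 * η * (1 - 3 * η)))) ∧
    (∀ τ : ℝ, τ ∈ Set.Ioo (0 : ℝ) 1 →
      ((2 / π) * Real.arctan
          ((1 - 6 * τ * (1 - τ)) /
            Real.sqrt (12 * τ * (1 - τ) * (1 - 3 * τ * (1 - τ)))) = 0 ↔
        τ = (3 - Real.sqrt 3) / 6 ∨ τ = 1 - (3 - Real.sqrt 3) / 6)) :=
  ⟨GaussSign.part1 η hη0 hη1, fun τ hτ => GaussSign.part2 τ hτ⟩
end
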